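/- arXiv:1112.0476 — 6 statements merged into one kernel-verified Lean document; each statement's English description precedes it below -/
import Mathlib

section
/- For α ∈ (1,2) and β = α - 1, the principal value integral ∫_{z ≥ -1} (|1+z|^β - 1) / |z|^{1+α} dz equals 0. -/
open MeasureTheory Filter Topology Set


section Aux

variable {α β : ℝ}

/-- Derivative of the antiderivative on the right piece `(0, ∞)`. -/
lemma pv_aux_hasDerivAt_right (hα1 : 1 < α) (hβ : β = α - 1) {z : ℝ} (hz : 0 < z) :
    HasDerivAt (fun z : ℝ => (1 - (1 + z) ^ α) / (α * z ^ α))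
      ((|1 + z| ^ β - 1) / |z| ^ (1 + α)) z := by
  have hα0 : (0:ℝ) < α := by linarith
  have h1z : (0:ℝ) < 1 + z := by linarith
  have h1 : HasDerivAt (fun z : ℝ => (1 + z) ^ α) (α * (1 + z) ^ (α - 1) * 1) z := by
    exact (Real.hasDerivAt_rpow_const (p := α) (Or.inl h1z.ne')).comp z
      ((hasDerivAt_id z).const_add 1)
  have h2 : HasDerivAt (fun z : ℝ => z ^ α) (α * z ^ (α - 1)) z :=
    Real.hasDerivAt_rpow_const (Or.inl hz.ne')
  have hzα : (0:ℝ) < z ^ α := Real.rpow_pos_of_pos hz α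
  have hden : α * z ^ α ≠ 0 := by positivity
  have H := ((hasDerivAt_const z (1:ℝ)).sub h1).div (h2.const_mul α) hden
  convert H using 1
  · rfl
  · rfl
  · rfl
  have e1 : z ^ (α - 1) = z ^ α / z := by rw [Real.rpow_sub hz, Real.rpow_one]
  have e2 : (1 + z) ^ (α - 1) = (1 + z) ^ α / (1 + z) := by
    rw [Real.rpow_sub h1z, Real.rpow_one]
  have e3 : z ^ (1 + α) = z * z ^ α := by rw [Real.rpow_add hz, Real.rpow_one]
  rw [hβ, abs_of_pos h1z, abs_of_pos hz, e1, e2, e3]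
  simp only [Pi.sub_apply]
  field_simp
  ring

/-- Derivative of the antiderivative on the left piece `(-1, 0)`. -/
lemma pv_aux_hasDerivAt_left (hα1 : 1 < α) (hβ : β = α - 1) {z : ℝ}
    (hz1 : -1 < z) (hz0 : z < 0) :
    HasDerivAt (fun z : ℝ => ((1 + z) ^ α - 1) / (α * (-z) ^ α))
      ((|1 + z| ^ β - 1) / |z| ^ (1 + α)) z := by
  have hα0 : (0:ℝ) < α := by linarith
  have h1z : (0:ℝ) < 1 + z := by linarith
  have hw : (0:ℝ) < -z := by linarith
  have h1 : HasDerivAt (fun z : ℝ => (1 + z) ^ α) (α * (1 + z) ^ (α - 1) * 1) z :=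
    (Real.hasDerivAt_rpow_const (p := α) (Or.inl h1z.ne')).comp z
      ((hasDerivAt_id z).const_add 1)
  have h2 : HasDerivAt (fun z : ℝ => (-z) ^ α) (α * (-z) ^ (α - 1) * (-1)) z :=
    (Real.hasDerivAt_rpow_const (p := α) (Or.inl hw.ne')).comp z (hasDerivAt_neg z)
  have hwα : (0:ℝ) < (-z) ^ α := Real.rpow_pos_of_pos hw α
  have hden : α * (-z) ^ α ≠ 0 := by positivity
  have H := (h1.sub_const 1).div (h2.const_mul α) hden
  convert H using 1
  · rfl
  · rfl
  · rfl
  have e1 : (-z) ^ (α - 1) = (-z) ^ α / (-z) := by rw [Real.rpow_sub hw, Real.rpow_one]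
  have e2 : (1 + z) ^ (α - 1) = (1 + z) ^ α / (1 + z) := by
    rw [Real.rpow_sub h1z, Real.rpow_one]
  have e3 : |z| ^ (1 + α) = -z * (-z) ^ α := by
    rw [abs_of_neg hz0, Real.rpow_add hw, Real.rpow_one]
  rw [hβ, abs_of_pos h1z, e1, e2, e3]
  field_simp [hz0.ne, hw.ne']
  ring

lemma pv_aux_tendsto_right (hα1 : 1 < α) :
    Tendsto (fun z : ℝ => (1 - (1 + z) ^ α) / (α * z ^ α)) atTop (𝓝 (-(1/α))) := by
  have hα0 : (0:ℝ) < α := by linarith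
  have h1 : Tendsto (fun z : ℝ => (1/α) * z ^ (-α) - (1/α) * (z⁻¹ + 1) ^ α) atTop
      (𝓝 (-(1/α))) := by
    have ha : Tendsto (fun z : ℝ => (1/α) * z ^ (-α)) atTop (𝓝 0) := by
      simpa using (tendsto_rpow_neg_atTop hα0).const_mul (1/α)
    have hb : Tendsto (fun z : ℝ => (z⁻¹ + 1) ^ α) atTop (𝓝 1) := by
      have h0 : Tendsto (fun z : ℝ => z⁻¹ + 1) atTop (𝓝 1) := by
        simpa using tendsto_inv_atTop_zero.add (tendsto_const_nhds (x := (1:ℝ)))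
      have hc : ContinuousAt (fun x : ℝ => x ^ α) 1 :=
        Real.continuousAt_rpow_const 1 α (Or.inl one_ne_zero)
      simpa [Real.one_rpow, Function.comp_def] using hc.tendsto.comp h0
    simpa using ha.sub (hb.const_mul (1/α))
  apply h1.congr'
  filter_upwards [eventually_gt_atTop (0:ℝ)] with z hz
  have hzα : (0:ℝ) < z ^ α := Real.rpow_pos_of_pos hz α
  have e1 : z ^ (-α) = (z ^ α)⁻¹ := Real.rpow_neg hz.le α
  have e2 : (z⁻¹ + 1) ^ α = (1 + z) ^ α / z ^ α := by
    rw [show z⁻¹ + 1 = (1 + z) / z by field_simp,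
      Real.div_rpow (by linarith) hz.le]
  rw [e1, e2]
  field_simp

lemma pv_aux_nonneg (hα1 : 1 < α) (hβ : β = α - 1) {b x : ℝ} (hb : 0 < b)
    (hx : x ∈ Ioi b) : 0 ≤ (|1 + x| ^ β - 1) / |x| ^ (1 + α) := by
  have hβ0 : (0:ℝ) < β := by rw [hβ]; linarith
  have hx : 0 < x := hb.trans hx
  have h1 : (1:ℝ) ≤ |1 + x| ^ β := by
    rw [abs_of_pos (by linarith)]
    exact Real.one_le_rpow (by linarith) hβ0.le
  have h2 : (0:ℝ) < |x| ^ (1 + α) := Real.rpow_pos_of_pos (abs_pos.mpr hx.ne') _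
  exact div_nonneg (by linarith) h2.le

lemma pv_aux_integrableOn_right (hα1 : 1 < α) (hβ : β = α - 1) {b : ℝ} (hb : 0 < b) :
    IntegrableOn (fun z : ℝ => (|1 + z| ^ β - 1) / |z| ^ (1 + α)) (Ioi b) :=
  integrableOn_Ioi_deriv_of_nonneg'
    (fun x hx => pv_aux_hasDerivAt_right hα1 hβ (lt_of_lt_of_le hb hx))
    (fun x hx => pv_aux_nonneg hα1 hβ hb hx) (pv_aux_tendsto_right hα1)

lemma pv_aux_integral_right (hα1 : 1 < α) (hβ : β = α - 1) {b : ℝ} (hb : 0 < b) :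
    ∫ z in Ioi b, (|1 + z| ^ β - 1) / |z| ^ (1 + α)
      = -(1/α) - (1 - (1 + b) ^ α) / (α * b ^ α) :=
  integral_Ioi_of_hasDerivAt_of_nonneg'
    (fun x hx => pv_aux_hasDerivAt_right hα1 hβ (lt_of_lt_of_le hb hx))
    (fun x hx => pv_aux_nonneg hα1 hβ hb hx) (pv_aux_tendsto_right hα1)

lemma pv_aux_integral_left (hα1 : 1 < α) (hβ : β = α - 1) {b : ℝ}
    (hb0 : 0 < b) (hb1 : b < 1) :
    ∫ z in Ioo (-1 : ℝ) (-b), (|1 + z| ^ β - 1) / |z| ^ (1 + α)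
      = ((1 - b) ^ α - 1) / (α * b ^ α) + 1/α := by
  have hα0 : (0:ℝ) < α := by linarith
  have hβ0 : (0:ℝ) < β := by rw [hβ]; linarith
  have hle : (-1:ℝ) ≤ -b := by linarith
  rw [← integral_Ioc_eq_integral_Ioo, ← intervalIntegral.integral_of_le hle]
  have hcont : ContinuousOn (fun z : ℝ => ((1 + z) ^ α - 1) / (α * (-z) ^ α))
      (Icc (-1) (-b)) := by
    apply ContinuousOn.div
    · exact (((continuous_const.add continuous_id).rpow_const
        (fun x => Or.inr hα0.le)).sub continuous_const).continuousOn
    · exact (continuous_const.mul (continuous_neg.rpow_const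
        (fun x => Or.inr hα0.le))).continuousOn
    · intro x hx
      have : (0:ℝ) < -x := by have := hx.2; simp only [mem_Icc] at hx; linarith [hx.2]
      have := Real.rpow_pos_of_pos this α
      positivity
  have hcf : ContinuousOn (fun z : ℝ => (|1 + z| ^ β - 1) / |z| ^ (1 + α))
      (uIcc (-1 : ℝ) (-b)) := by
    rw [uIcc_of_le hle]
    apply ContinuousOn.div
    · exact (((continuous_const.add continuous_id).abs.rpow_const
        (fun x => Or.inr hβ0.le)).sub continuous_const).continuousOn
    · exact (continuous_abs.rpow_const (fun x => Or.inr (by linarith))).continuousOn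
    · intro x hx
      simp only [mem_Icc] at hx
      have hx0 : (0:ℝ) < |x| := abs_pos.mpr (by nlinarith [hx.2] : x ≠ 0)
      exact (Real.rpow_pos_of_pos hx0 _).ne'
  rw [intervalIntegral.integral_eq_sub_of_hasDerivAt_of_le hle hcont
    (fun x hx => pv_aux_hasDerivAt_left hα1 hβ hx.1 (by have := hx.2; linarith))
    (hcf.intervalIntegrable)]
  have : ((1:ℝ) + -1) = 0 := by ring
  rw [this, Real.zero_rpow hα0.ne']
  norm_num
  ring

lemma pv_aux_integrableOn_left (hα1 : 1 < α) (hβ : β = α - 1) {b : ℝ}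
    (hb0 : 0 < b) (hb1 : b < 1) :
    IntegrableOn (fun z : ℝ => (|1 + z| ^ β - 1) / |z| ^ (1 + α)) (Ioo (-1 : ℝ) (-b)) := by
  have hβ0 : (0:ℝ) < β := by rw [hβ]; linarith
  have hcf : ContinuousOn (fun z : ℝ => (|1 + z| ^ β - 1) / |z| ^ (1 + α))
      (Icc (-1 : ℝ) (-b)) := by
    apply ContinuousOn.div
    · exact (((continuous_const.add continuous_id).abs.rpow_const
        (fun x => Or.inr hβ0.le)).sub continuous_const).continuousOn
    · exact (continuous_abs.rpow_const (fun x => Or.inr (by linarith))).continuousOn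
    · intro x hx
      simp only [mem_Icc] at hx
      have hx0 : (0:ℝ) < |x| := abs_pos.mpr (by nlinarith [hx.2] : x ≠ 0)
      exact (Real.rpow_pos_of_pos hx0 _).ne'
  exact (hcf.integrableOn_compact isCompact_Icc).mono_set Ioo_subset_Icc_self

lemma pv_aux_key (hα1 : 1 < α) (hβ : β = α - 1) {b : ℝ} (hb0 : 0 < b) (hb1 : b < 1) :
    (∫ z in {z : ℝ | -1 < z ∧ b < |z|}, (|1 + z| ^ β - 1) / |z| ^ (1 + α))
      = ((1 + b) ^ α + (1 - b) ^ α - 2) / (α * b ^ α) := by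
  have hα0 : (0:ℝ) < α := by linarith
  have hset : {z : ℝ | -1 < z ∧ b < |z|} = Ioo (-1 : ℝ) (-b) ∪ Ioi b := by
    ext z
    simp only [mem_setOf_eq, mem_union, mem_Ioo, mem_Ioi, lt_abs]
    constructor
    · rintro ⟨h1, h2 | h2⟩
      · right; exact h2
      · left; exact ⟨h1, by linarith⟩
    · rintro (⟨h1, h2⟩ | h)
      · exact ⟨h1, Or.inr (by linarith)⟩
      · exact ⟨by linarith, Or.inl h⟩
  have hdisj : Disjoint (Ioo (-1 : ℝ) (-b)) (Ioi b) := by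
    apply Set.disjoint_left.mpr
    rintro z ⟨_, h2⟩ h3
    simp only [mem_Ioi] at h3
    linarith
  rw [hset, setIntegral_union hdisj measurableSet_Ioi
    (pv_aux_integrableOn_left hα1 hβ hb0 hb1) (pv_aux_integrableOn_right hα1 hβ hb0),
    pv_aux_integral_left hα1 hβ hb0 hb1, pv_aux_integral_right hα1 hβ hb0]
  have hbα : (0:ℝ) < b ^ α := Real.rpow_pos_of_pos hb0 α
  field_simp
  ring

end Aux

/-- For `α ∈ (1,2)` and `β = α - 1`, the principal value integral
`P.V. ∫_{z ≥ -1} (|1+z|^β - 1)/|z|^{1+α} dz = 0`. -/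
theorem pv_integral_rpow_sub_one_eq_zero (α β : ℝ) (hα1 : 1 < α) (hα2 : α < 2)
    (hβ : β = α - 1) :
    Tendsto (fun b : ℝ =>
        ∫ z in {z : ℝ | -1 < z ∧ b < |z|}, (|1 + z| ^ β - 1) / |z| ^ (1 + α))
      (𝓝[>] (0 : ℝ)) (𝓝 0) := by
  have hα0 : (0:ℝ) < α := by linarith
  have hmem : Ioo (0:ℝ) 1 ∈ 𝓝[>] (0:ℝ) :=
    Ioo_mem_nhdsGT_of_mem (by norm_num : (0:ℝ) ∈ Ico (0:ℝ) 1)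
  have hlim : Tendsto (fun b : ℝ => ((1 + b) ^ α + (1 - b) ^ α - 2) / (α * b ^ α))
      (𝓝[>] (0:ℝ)) (𝓝 0) := by
    have h2α : (0:ℝ) < 2 - α := by linarith
    have hub : Tendsto (fun b : ℝ => 2 * (α - 1) / α * b ^ (2 - α)) (𝓝[>] (0:ℝ)) (𝓝 0) := by
      have h1 : Tendsto (fun b : ℝ => b ^ (2 - α)) (𝓝 (0:ℝ)) (𝓝 0) := by
        have := (Real.continuousAt_rpow_const 0 (2 - α) (Or.inr h2α.le)).tendsto
        simpa [Real.zero_rpow h2α.ne'] using this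
      simpa using ((h1.mono_left nhdsWithin_le_nhds).const_mul (2 * (α - 1) / α))
    apply squeeze_zero' ?_ ?_ hub
    · filter_upwards [hmem] with b hb
      obtain ⟨hb0, hb1⟩ := hb
      have hbα : (0:ℝ) < b ^ α := Real.rpow_pos_of_pos hb0 α
      have h1 : 1 + α * b ≤ (1 + b) ^ α :=
        one_add_mul_self_le_rpow_one_add (by linarith) hα1.le
      have h2 : 1 + α * (-b) ≤ (1 + -b) ^ α :=
        one_add_mul_self_le_rpow_one_add (by linarith) hα1.le
      rw [show (1:ℝ) + -b = 1 - b by ring] at h2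
      apply div_nonneg (by nlinarith) (by positivity)
    · filter_upwards [hmem] with b hb
      obtain ⟨hb0, hb1⟩ := hb
      have hbα : (0:ℝ) < b ^ α := Real.rpow_pos_of_pos hb0 α
      have h1b : (0:ℝ) < 1 + b := by linarith
      have h1b' : (0:ℝ) < 1 - b := by linarith
      have e : b ^ α * b ^ (2 - α) = b * b := by
        rw [← Real.rpow_add hb0, show α + (2 - α) = ((2:ℕ):ℝ) by norm_num,
          Real.rpow_natCast]
        ring
      have hA : (1 + b) ^ α ≤ (1 + b) * (1 + (α - 1) * b) := by
        have h1 : (1 + b) ^ α = (1 + b) * (1 + b) ^ (α - 1) := by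
          rw [show α = 1 + (α - 1) by ring, Real.rpow_add h1b, Real.rpow_one]
          ring_nf
        have h2 : (1 + b) ^ (α - 1) ≤ 1 + (α - 1) * b :=
          rpow_one_add_le_one_add_mul_self (by linarith) (by linarith) (by linarith)
        rw [h1]
        exact mul_le_mul_of_nonneg_left h2 h1b.le
      have hB : (1 - b) ^ α ≤ (1 - b) * (1 + (α - 1) * (-b)) := by
        have h1 : (1 - b) ^ α = (1 - b) * (1 - b) ^ (α - 1) := by
          rw [show α = 1 + (α - 1) by ring, Real.rpow_add h1b', Real.rpow_one]
          ring_nf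
        have h2 : (1 + -b) ^ (α - 1) ≤ 1 + (α - 1) * (-b) :=
          rpow_one_add_le_one_add_mul_self (by linarith) (by linarith) (by linarith)
        rw [show (1:ℝ) + -b = 1 - b by ring] at h2
        rw [h1]
        exact mul_le_mul_of_nonneg_left h2 h1b'.le
      rw [div_le_iff₀ (by positivity)]
      calc (1 + b) ^ α + (1 - b) ^ α - 2 ≤ 2 * (α - 1) * (b * b) := by nlinarith
        _ = 2 * (α - 1) / α * b ^ (2 - α) * (α * b ^ α) := by
            rw [← e]; field_simp
  apply Tendsto.congr' _ hlim
  filter_upwards [hmem] with b hb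
  exact (pv_aux_key hα1 hβ hb.1 hb.2).symm
end

section
/- For α ∈ (1,2) and β ∈ (α-1, 1), the principal value integral ∫_{z ≥ -1} (|1+z|^β - 1)/|z|^{1+α} dz is strictly positive; for β ∈ (0, α-1) it is strictly negative. -/
open MeasureTheory Filter Topology

namespace PVauxInternal
open Set Real

noncomputable def fI (α β z : ℝ) : ℝ := (|1 + z| ^ β - 1) / |z| ^ (1 + α)
noncomputable def FI (α β z : ℝ) : ℝ :=
  ((1 + z) ^ β - 1) * (1 - (1 + z) ^ (α - 1 - β)) / z ^ (1 + α)

variable {α β : ℝ}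

lemma abs_rpow_sub_one_le {p z : ℝ} (hp : |p| ≤ 1) (hz : 0 ≤ z) :
    |(1 + z) ^ p - 1| ≤ |p| * z := by
  rcases le_or_gt 0 p with hp0 | hp0
  · have h1 : (1:ℝ) ≤ (1 + z) ^ p :=
      Real.one_le_rpow (by linarith) hp0
    have h2 : (1 + z) ^ p ≤ 1 + p * z :=
      rpow_one_add_le_one_add_mul_self (by linarith) hp0 (by rwa [abs_of_nonneg hp0] at hp)
    rw [abs_of_nonneg (by linarith), abs_of_nonneg hp0]
    linarith
  · have hu : (1:ℝ) ≤ 1 + z := by linarith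
    have hup : (1 + z) ^ p ≤ 1 := Real.rpow_le_one_of_one_le_of_nonpos hu hp0.le
    have hq0 : 0 ≤ -p := by linarith
    have hq1 : -p ≤ 1 := by rwa [abs_of_neg hp0] at hp
    have h2 : (1 + z) ^ (-p) ≤ 1 + (-p) * z :=
      rpow_one_add_le_one_add_mul_self (by linarith) hq0 hq1
    have h3 : 1 - (1 + z) ^ p ≤ (1 + z) ^ (-p) - 1 := by
      have hpos : 0 < (1 + z) ^ p := Real.rpow_pos_of_pos (by linarith) p
      have : (1 + z) ^ p * (1 + z) ^ (-p) = 1 := by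
        rw [← Real.rpow_add (by linarith : (0:ℝ) < 1 + z)]; simp
      nlinarith [Real.rpow_pos_of_pos (show (0:ℝ) < 1 + z by linarith) (-p)]
    rw [abs_of_nonpos (by linarith), abs_of_neg hp0]
    linarith

lemma fI_pos_eq {z : ℝ} (hz : (0:ℝ) < z) :
    fI α β z = ((1 + z) ^ β - 1) / z ^ (1 + α) := by
  rw [fI, abs_of_pos hz, abs_of_pos (by linarith : (0:ℝ) < 1 + z)]

lemma fI_nonneg (hβ0 : 0 ≤ β) {z : ℝ} (hz : (0:ℝ) < z) : 0 ≤ fI α β z := by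
  rw [fI_pos_eq hz]
  apply div_nonneg _ (Real.rpow_nonneg hz.le _)
  have : (1:ℝ) ≤ (1 + z) ^ β := Real.one_le_rpow (by linarith) hβ0
  linarith

lemma fI_le (hβ0 : 0 ≤ β) (hβ1 : β ≤ 1) {z : ℝ} (hz : (0:ℝ) < z) :
    fI α β z ≤ β * z ^ (-α) := by
  rw [fI_pos_eq hz]
  have h1 : (1 + z) ^ β - 1 ≤ β * z :=
    by have := rpow_one_add_le_one_add_mul_self (by linarith : (-1:ℝ) ≤ z) hβ0 hβ1; linarith
  have hzp : (0:ℝ) < z ^ (1 + α) := Real.rpow_pos_of_pos hz _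
  rw [div_le_iff₀ hzp]
  calc (1 + z) ^ β - 1 ≤ β * z := h1
    _ = β * z ^ (-α) * z ^ (1 + α) := by
        rw [mul_assoc, ← Real.rpow_add hz, show -α + (1+α) = 1 by ring, Real.rpow_one]

lemma continuousOn_fI (hβ0 : 0 < β) : ContinuousOn (fI α β) {z : ℝ | z ≠ 0} := by
  apply ContinuousOn.div
  · apply ContinuousOn.sub _ continuousOn_const
    exact (continuous_abs.comp (continuous_const.add continuous_id)).continuousOn.rpow_const
      (fun x _ => Or.inr hβ0.le)
  · exact continuous_abs.continuousOn.rpow_const (fun x hx => Or.inl (abs_ne_zero.2 hx))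
  · intro x hx
    exact (Real.rpow_pos_of_pos (abs_pos.2 hx) _).ne'

lemma integrableOn_fI_Ioi (hβ0 : 0 < β) (hβ1 : β ≤ 1) (hα1 : 1 < α) {b : ℝ} (hb : 0 < b) :
    IntegrableOn (fI α β) (Ioi b) := by
  have hmeas : AEStronglyMeasurable (fI α β) (volume.restrict (Ioi b)) :=
    ((continuousOn_fI hβ0).mono (fun x hx => (hb.trans hx).ne')).aestronglyMeasurable
      measurableSet_Ioi
  have hbig : IntegrableOn (fun z => β * z ^ (-α)) (Ioi b) :=
    (integrableOn_Ioi_rpow_of_lt (by linarith) hb).const_mul β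
  refine hbig.mono' hmeas ?_
  filter_upwards [ae_restrict_mem measurableSet_Ioi] with z hz
  rw [Real.norm_eq_abs, abs_of_nonneg (fI_nonneg hβ0.le (hb.trans hz))]
  exact fI_le hβ0.le hβ1 (hb.trans hz)

lemma FI_pos (hβ0 : 0 < β) (hq : α - 1 < β) {z : ℝ} (hz : 0 < z) : 0 < FI α β z := by
  have hu : (1:ℝ) < 1 + z := by linarith
  have h1 : (1:ℝ) < (1 + z) ^ β := by
    rw [Real.one_lt_rpow_iff_of_pos (by linarith)]; exact Or.inl ⟨hu, hβ0⟩
  have h2 : (1 + z) ^ (α - 1 - β) < 1 :=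
    Real.rpow_lt_one_of_one_lt_of_neg hu (by linarith)
  have hd : (0:ℝ) < z ^ (1 + α) := Real.rpow_pos_of_pos hz _
  exact div_pos (mul_pos (by linarith) (by linarith)) hd

lemma FI_neg (hβ0 : 0 < β) (hq : β < α - 1) {z : ℝ} (hz : 0 < z) : FI α β z < 0 := by
  have hu : (1:ℝ) < 1 + z := by linarith
  have h1 : (1:ℝ) < (1 + z) ^ β := by
    rw [Real.one_lt_rpow_iff_of_pos (by linarith)]; exact Or.inl ⟨hu, hβ0⟩
  have h2 : (1:ℝ) < (1 + z) ^ (α - 1 - β) := by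
    rw [Real.one_lt_rpow_iff_of_pos (by linarith)]; exact Or.inl ⟨hu, by linarith⟩
  have hd : (0:ℝ) < z ^ (1 + α) := Real.rpow_pos_of_pos hz _
  apply div_neg_of_neg_of_pos _ hd
  nlinarith

lemma FI_abs_le (hβ0 : 0 < β) (hβ1 : β ≤ 1) (hq : |α - 1 - β| ≤ 1) {z : ℝ} (hz : 0 < z) :
    |FI α β z| ≤ (β * |α - 1 - β|) * z ^ (1 - α) := by
  have hd : (0:ℝ) < z ^ (1 + α) := Real.rpow_pos_of_pos hz _
  have h1 : |(1 + z) ^ β - 1| ≤ β * z := by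
    have := abs_rpow_sub_one_le (p := β) (by rw [abs_of_pos hβ0]; exact hβ1) hz.le
    rwa [abs_of_pos hβ0] at this
  have h2 : |1 - (1 + z) ^ (α - 1 - β)| ≤ |α - 1 - β| * z := by
    rw [abs_sub_comm]; exact abs_rpow_sub_one_le hq hz.le
  have hnum : |((1 + z) ^ β - 1) * (1 - (1 + z) ^ (α - 1 - β))| ≤ (β * |α - 1 - β|) * (z * z) := by
    rw [abs_mul]
    calc |(1 + z) ^ β - 1| * |1 - (1 + z) ^ (α - 1 - β)| ≤ (β * z) * (|α - 1 - β| * z) := by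
          apply mul_le_mul h1 h2 (abs_nonneg _) (by positivity)
      _ = (β * |α - 1 - β|) * (z * z) := by ring
  rw [FI, abs_div, abs_of_pos hd, div_le_iff₀ hd]
  calc |((1 + z) ^ β - 1) * (1 - (1 + z) ^ (α - 1 - β))| ≤ (β * |α - 1 - β|) * (z * z) := hnum
    _ = (β * |α - 1 - β|) * z ^ (1 - α) * z ^ (1 + α) := by
        have hzz : z ^ (1 - α) * z ^ (1 + α) = z * z := by
          rw [← Real.rpow_add hz, show (1 - α) + (1 + α) = 1 + 1 by ring,
            Real.rpow_add hz, Real.rpow_one]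
        rw [mul_assoc (β * |α - 1 - β|), hzz]

lemma FI_abs_le_atTop (hβ0 : 0 < β) (hβ1 : β ≤ 1) (hα2 : α ≤ 2) {z : ℝ} (hz : 1 ≤ z) :
    |FI α β z| ≤ 2 * z ^ (max β (α - 1) - 1 - α) := by
  have hz0 : (0:ℝ) < z := by linarith
  have hu1 : (1:ℝ) ≤ 1 + z := by linarith
  have hu0 : (0:ℝ) < 1 + z := by linarith
  have hd : (0:ℝ) < z ^ (1 + α) := Real.rpow_pos_of_pos hz0 _
  set q := α - 1 - β with hqdef
  have h1 : |(1 + z) ^ β - 1| ≤ (1 + z) ^ β := by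
    rw [abs_of_nonneg (by linarith [Real.one_le_rpow hu1 hβ0.le])]
    linarith [Real.one_le_rpow hu1 hβ0.le]
  have h2 : |1 - (1 + z) ^ q| ≤ (1 + z) ^ (max q 0) := by
    rcases le_or_gt q 0 with h | h
    · have : (1 + z) ^ q ≤ 1 := Real.rpow_le_one_of_one_le_of_nonpos hu1 h
      rw [abs_of_nonneg (by linarith)]
      have : (1:ℝ) ≤ (1 + z) ^ (max q 0) := Real.one_le_rpow hu1 (le_max_right _ _)
      linarith [Real.rpow_pos_of_pos hu0 q]
    · have h1' : (1:ℝ) ≤ (1 + z) ^ q := Real.one_le_rpow hu1 h.le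
      rw [abs_of_nonpos (by linarith), max_eq_left h.le]
      linarith
  have hm : β + max q 0 = max β (α - 1) := by
    rcases le_or_gt q 0 with h | h
    · rw [max_eq_right h, max_eq_left (by rw [hqdef] at h; linarith : α - 1 ≤ β)]; ring
    · rw [max_eq_left h.le, max_eq_right (by rw [hqdef] at h; linarith : β ≤ α - 1)]; ring
  have hmle : max β (α - 1) ≤ 1 := max_le hβ1 (by linarith)
  have hnum : |((1 + z) ^ β - 1) * (1 - (1 + z) ^ q)| ≤ 2 * z ^ (max β (α - 1)) := by
    rw [abs_mul]
    calc |(1 + z) ^ β - 1| * |1 - (1 + z) ^ q| ≤ (1 + z) ^ β * (1 + z) ^ (max q 0) :=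
          mul_le_mul h1 h2 (abs_nonneg _) (Real.rpow_nonneg hu0.le _)
      _ = (1 + z) ^ (max β (α - 1)) := by rw [← Real.rpow_add hu0, hm]
      _ ≤ (2 * z) ^ (max β (α - 1)) := by
          apply Real.rpow_le_rpow hu0.le (by linarith) (le_trans hβ0.le (le_max_left _ _))
      _ = 2 ^ (max β (α - 1)) * z ^ (max β (α - 1)) := Real.mul_rpow (by norm_num) hz0.le
      _ ≤ 2 * z ^ (max β (α - 1)) := by
          apply mul_le_mul_of_nonneg_right _ (Real.rpow_nonneg hz0.le _)
          calc (2:ℝ) ^ (max β (α - 1)) ≤ 2 ^ (1:ℝ) :=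
                Real.rpow_le_rpow_of_exponent_le (by norm_num) hmle
            _ = 2 := Real.rpow_one 2
  rw [FI, abs_div, abs_of_pos hd, div_le_iff₀ hd]
  calc |((1 + z) ^ β - 1) * (1 - (1 + z) ^ q)| ≤ 2 * z ^ (max β (α - 1)) := hnum
    _ = 2 * z ^ (max β (α - 1) - 1 - α) * z ^ (1 + α) := by
        rw [mul_assoc, ← Real.rpow_add hz0]; ring_nf

lemma continuousOn_FI (hβ0 : 0 < β) : ContinuousOn (FI α β) (Ioi 0) := by
  have hc1 : ContinuousOn (fun z : ℝ => (1 + z) ^ β) (Ioi 0) :=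
    (continuous_const.add continuous_id).continuousOn.rpow_const
      (fun x hx => Or.inl (by simp only [mem_Ioi] at hx; show (1:ℝ) + x ≠ 0; intro h; linarith))
  have hc2 : ContinuousOn (fun z : ℝ => (1 + z) ^ (α - 1 - β)) (Ioi 0) :=
    (continuous_const.add continuous_id).continuousOn.rpow_const
      (fun x hx => Or.inl (by simp only [mem_Ioi] at hx; show (1:ℝ) + x ≠ 0; intro h; linarith))
  have hc3 : ContinuousOn (fun z : ℝ => z ^ (1 + α)) (Ioi 0) :=
    continuousOn_id.rpow_const (fun x hx => Or.inl (ne_of_gt hx))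
  exact (((hc1.sub continuousOn_const).mul (continuousOn_const.sub hc2)).div hc3
    (fun x hx => (Real.rpow_pos_of_pos hx _).ne'))

lemma integrableOn_FI (hβ0 : 0 < β) (hβ1 : β < 1) (hα1 : 1 < α) (hα2 : α < 2) :
    IntegrableOn (FI α β) (Ioi 0) := by
  have hq : |α - 1 - β| ≤ 1 := by rw [abs_le]; constructor <;> linarith
  have hmeas : ∀ s : Set ℝ, MeasurableSet s → s ⊆ Ioi 0 →
      AEStronglyMeasurable (FI α β) (volume.restrict s) := fun s hs hsub =>
    ((continuousOn_FI hβ0).mono hsub).aestronglyMeasurable hs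
  rw [show Ioi (0:ℝ) = Ioc 0 1 ∪ Ioi 1 from (Ioc_union_Ioi_eq_Ioi zero_le_one).symm]
  apply IntegrableOn.union
  · have hbig : IntegrableOn (fun z : ℝ => (β * |α - 1 - β|) * z ^ (1 - α)) (Ioc 0 1) := by
      rw [integrableOn_Ioc_iff_integrableOn_Ioo]
      exact ((intervalIntegral.integrableOn_Ioo_rpow_iff zero_lt_one).2 (by linarith)).const_mul _
    refine hbig.mono' (hmeas _ measurableSet_Ioc Ioc_subset_Ioi_self) ?_
    filter_upwards [ae_restrict_mem measurableSet_Ioc] with z hz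
    exact FI_abs_le hβ0 hβ1.le hq hz.1
  · have hbig : IntegrableOn (fun z : ℝ => 2 * z ^ (max β (α - 1) - 1 - α)) (Ioi 1) := by
      apply Integrable.const_mul
      apply integrableOn_Ioi_rpow_of_lt _ zero_lt_one
      have : max β (α - 1) < α := max_lt (by linarith) (by linarith)
      linarith
    refine hbig.mono' (hmeas _ measurableSet_Ioi (Ioi_subset_Ioi zero_le_one)) ?_
    filter_upwards [ae_restrict_mem measurableSet_Ioi] with z hz
    exact FI_abs_le_atTop hβ0 hβ1.le hα2.le hz.le

lemma integral_FI_pos (hβ0 : 0 < β) (hβ1 : β < 1) (hα1 : 1 < α) (hα2 : α < 2)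
    (hq : α - 1 < β) : 0 < ∫ z in Ioi (0:ℝ), FI α β z := by
  rw [setIntegral_pos_iff_support_of_nonneg_ae]
  · have hsub : Ioi (0:ℝ) ⊆ Function.support (FI α β) ∩ Ioi 0 := fun z hz =>
      ⟨ne_of_gt (FI_pos hβ0 hq hz), hz⟩
    refine lt_of_lt_of_le ?_ (measure_mono hsub)
    simp
  · filter_upwards [ae_restrict_mem measurableSet_Ioi] with z hz
    exact (FI_pos hβ0 hq hz).le
  · exact integrableOn_FI hβ0 hβ1 hα1 hα2

lemma integral_FI_neg (hβ0 : 0 < β) (hβ1 : β < 1) (hα1 : 1 < α) (hα2 : α < 2)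
    (hq : β < α - 1) : (∫ z in Ioi (0:ℝ), FI α β z) < 0 := by
  have h : 0 < ∫ z in Ioi (0:ℝ), -FI α β z := by
    rw [setIntegral_pos_iff_support_of_nonneg_ae]
    · have hsub : Ioi (0:ℝ) ⊆ Function.support (fun z => -FI α β z) ∩ Ioi 0 := fun z hz =>
        ⟨neg_ne_zero.2 (ne_of_lt (FI_neg hβ0 hq hz)), hz⟩
      refine lt_of_lt_of_le ?_ (measure_mono hsub)
      simp
    · filter_upwards [ae_restrict_mem measurableSet_Ioi] with z hz
      simp only [Pi.zero_apply, le_neg]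
      simpa using (FI_neg hβ0 hq hz).le
    · exact (integrableOn_FI hβ0 hβ1 hα1 hα2).neg
  rw [integral_neg] at h
  linarith

lemma key_identity {w : ℝ} (hw : 0 < w) :
    ((1 + w) ^ 2)⁻¹ * fI α β (-w / (1 + w)) = FI α β w - fI α β w := by
  have hu : (0:ℝ) < 1 + w := by linarith
  have h1 : 1 + (-w / (1 + w)) = (1 + w)⁻¹ := by field_simp; ring
  have h2 : |1 + (-w / (1 + w))| = (1 + w)⁻¹ := by rw [h1, abs_of_pos (by positivity)]
  have h3 : |(-w / (1 + w))| = w / (1 + w) := by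
    rw [abs_div, abs_neg, abs_of_pos hw, abs_of_pos hu]
  rw [fI, h2, h3, fI, FI, abs_of_pos (by linarith : (0:ℝ) < 1 + w), abs_of_pos hw,
    Real.inv_rpow hu.le, Real.div_rpow hw.le hu.le]
  have ha : (0:ℝ) < (1 + w) ^ β := Real.rpow_pos_of_pos hu _
  have hb' : (0:ℝ) < (1 + w) ^ (α - 1 - β) := Real.rpow_pos_of_pos hu _
  have hwp : (0:ℝ) < w ^ (1 + α) := Real.rpow_pos_of_pos hw _
  have hD : (1 + w) ^ (1 + α) = (1 + w) ^ β * (1 + w) ^ (α - 1 - β) * (1 + w) ^ 2 := by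
    rw [← Real.rpow_two, ← Real.rpow_add hu, ← Real.rpow_add hu]
    congr 1
    ring
  rw [hD]
  field_simp
  ring

lemma cov {b : ℝ} (hb : 0 < b) (hb1 : b < 1) :
    ∫ z in Ioo (-1 : ℝ) (-b), fI α β z
      = ∫ w in Ioi (b / (1 - b)), ((1 + w) ^ 2)⁻¹ * fI α β (-w / (1 + w)) := by
  set c := b / (1 - b) with hcdef
  have hc : 0 < c := div_pos hb (by linarith)
  have h_img : (fun w : ℝ => -w / (1 + w)) '' Ioi c = Ioo (-1 : ℝ) (-b) := by
    ext y
    simp only [mem_image, mem_Ioi, mem_Ioo]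
    constructor
    · rintro ⟨x, hx, rfl⟩
      have hx0 : 0 < x := hc.trans hx
      have hux : (0:ℝ) < 1 + x := by linarith
      constructor
      · rw [lt_div_iff₀ hux]
        · linarith
      · rw [div_lt_iff₀ hux]
        have : c * (1 - b) = b := by
          rw [hcdef]; exact div_mul_cancel₀ b (by linarith)
        nlinarith [hx, hb, hb1]
    · rintro ⟨hy1, hy2⟩
      have hy0 : y < 0 := by linarith
      have huy : (0:ℝ) < 1 + y := by linarith
      refine ⟨-y / (1 + y), ?_, ?_⟩
      · rw [hcdef, div_lt_div_iff₀ (by linarith) huy]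
        nlinarith
      · field_simp; ring
  have h_deriv : ∀ x ∈ Ioi c, HasDerivWithinAt (fun w : ℝ => -w / (1 + w))
      (-((1 + x) ^ 2)⁻¹) (Ioi c) x := by
    intro x hx
    have hux : (1:ℝ) + x ≠ 0 := by have := hc.trans hx; intro h; linarith
    have h := (hasDerivAt_neg x).div ((hasDerivAt_id x).const_add 1) hux
    convert h.hasDerivWithinAt using 1
    · rfl
    · rfl
    · rfl
    simp only [id]
    field_simp
    ring
  have h_inj : InjOn (fun w : ℝ => -w / (1 + w)) (Ioi c) := by
    intro a ha b' hb'
    simp only [mem_Ioi] at ha hb'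
    have ha0 : 0 < a := hc.trans ha
    have hb0 : 0 < b' := hc.trans hb'
    intro h
    have h1 : (0:ℝ) < 1 + a := by linarith
    have h2 : (0:ℝ) < 1 + b' := by linarith
    field_simp at h
    nlinarith
  rw [← h_img, integral_image_eq_integral_abs_deriv_smul measurableSet_Ioi h_deriv h_inj]
  apply setIntegral_congr_fun measurableSet_Ioi
  intro x hx
  have hux : (0:ℝ) < 1 + x := by have := hc.trans hx; linarith
  simp only [smul_eq_mul, abs_neg, abs_inv,
    abs_of_pos (show (0:ℝ) < (1+x)^2 by positivity)]

lemma set_eq {b : ℝ} (hb : 0 < b) :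
    {z : ℝ | -1 < z ∧ b < |z|} = Ioo (-1 : ℝ) (-b) ∪ Ioi b := by
  ext z
  simp only [mem_setOf_eq, mem_union, mem_Ioo, mem_Ioi]
  rcases le_or_gt z 0 with hz | hz
  · rw [abs_of_nonpos hz]
    constructor
    · rintro ⟨h1, h2⟩; exact Or.inl ⟨h1, by linarith⟩
    · rintro (⟨h1, h2⟩ | h1) <;>
        [exact ⟨h1, by linarith⟩; exact absurd (h1.trans_le hz) (not_lt.2 hb.le)]
  · rw [abs_of_pos hz]
    constructor
    · rintro ⟨h1, h2⟩; exact Or.inr h2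
    · rintro (⟨h1, h2⟩ | h1); · linarith
      exact ⟨by linarith, h1⟩

lemma integrableOn_fI_Ioo (hβ0 : 0 < β) (hα1 : 1 < α) {b : ℝ} (hb : 0 < b) (hb1 : b < 1) :
    IntegrableOn (fI α β) (Ioo (-1 : ℝ) (-b)) := by
  have hmeas : AEStronglyMeasurable (fI α β) (volume.restrict (Ioo (-1 : ℝ) (-b))) :=
    ((continuousOn_fI hβ0).mono (fun x hx => by
      simp only [mem_Ioo] at hx; simp only [mem_setOf_eq]; intro h; rw [h] at hx; linarith [hx.2]
      )).aestronglyMeasurable measurableSet_Ioo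
  have hbound : ∀ z ∈ Ioo (-1 : ℝ) (-b), ‖fI α β z‖ ≤ (b ^ (1 + α))⁻¹ := by
    intro z hz
    simp only [mem_Ioo] at hz
    have hz0 : z < 0 := by linarith [hz.2]
    have h1z : (0:ℝ) < 1 + z := by linarith [hz.1]
    have habs : |z| = -z := abs_of_neg hz0
    have hnum : |(|1 + z| ^ β - 1)| ≤ 1 := by
      rw [abs_of_pos h1z]
      have h1 : (1 + z) ^ β ≤ 1 := Real.rpow_le_one h1z.le (by linarith [hz.2]) hβ0.le
      have h2 : (0:ℝ) < (1 + z) ^ β := Real.rpow_pos_of_pos h1z _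
      rw [abs_of_nonpos (by linarith)]; linarith
    have hden : b ^ (1 + α) ≤ |z| ^ (1 + α) := by
      apply Real.rpow_le_rpow hb.le _ (by linarith : (0:ℝ) ≤ 1 + α)
      rw [habs]; linarith [hz.2]
    have hdenpos : (0:ℝ) < |z| ^ (1 + α) := Real.rpow_pos_of_pos (abs_pos.2 hz0.ne) _
    rw [fI, Real.norm_eq_abs, abs_div, abs_of_pos hdenpos, ← one_div]
    exact div_le_div₀ zero_le_one hnum (by positivity) hden
  apply Integrable.mono' (g := fun _ => (b ^ (1 + α))⁻¹) (integrable_const _) hmeas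
  filter_upwards [ae_restrict_mem measurableSet_Ioo] with z hz using hbound z hz

lemma decomposition (hβ0 : 0 < β) (hβ1 : β < 1) (hα1 : 1 < α) (hα2 : α < 2)
    {b : ℝ} (hb : 0 < b) (hb1 : b < 1 / 2) :
    ∫ z in {z : ℝ | -1 < z ∧ b < |z|}, fI α β z
      = (∫ w in Ioi (b / (1 - b)), FI α β w) + ∫ z in Ioc b (b / (1 - b)), fI α β z := by
  set c := b / (1 - b) with hcdef
  have hc0 : 0 < c := div_pos hb (by linarith)
  have hbc : b ≤ c := by
    rw [hcdef, le_div_iff₀ (by linarith)]; nlinarith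
  have hintF : IntegrableOn (FI α β) (Ioi c) :=
    (integrableOn_FI hβ0 hβ1 hα1 hα2).mono_set (Ioi_subset_Ioi hc0.le)
  have hintfc : IntegrableOn (fI α β) (Ioi c) := integrableOn_fI_Ioi hβ0 hβ1.le hα1 hc0
  have hintfb : IntegrableOn (fI α β) (Ioi b) := integrableOn_fI_Ioi hβ0 hβ1.le hα1 hb
  rw [set_eq hb, setIntegral_union (by
        rw [Set.disjoint_left]; intro z hz1 hz2
        simp only [mem_Ioo] at hz1; simp only [mem_Ioi] at hz2; linarith [hz1.2])
      measurableSet_Ioi (integrableOn_fI_Ioo hβ0 hα1 hb (by linarith)) hintfb]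
  rw [cov hb (by linarith), ← hcdef]
  rw [setIntegral_congr_fun measurableSet_Ioi
      (fun w hw => key_identity (α := α) (β := β) (hc0.trans hw))]
  rw [integral_sub hintF hintfc]
  have hsplit : ∫ z in Ioi b, fI α β z
      = (∫ z in Ioc b c, fI α β z) + ∫ z in Ioi c, fI α β z := by
    rw [← setIntegral_union (Ioc_disjoint_Ioi le_rfl) measurableSet_Ioi
      (hintfb.mono_set Ioc_subset_Ioi_self) hintfc, Ioc_union_Ioi_eq_Ioi hbc]
  rw [hsplit]; ring

lemma tendsto_c : Tendsto (fun b : ℝ => b / (1 - b)) (𝓝[>] (0:ℝ)) (𝓝[>] (0:ℝ)) := by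
  rw [tendsto_nhdsWithin_iff]
  constructor
  · have h0 : Tendsto (fun b : ℝ => b / (1 - b)) (𝓝 (0:ℝ)) (𝓝 ((0:ℝ) / (1 - 0))) :=
      (tendsto_id.div (tendsto_const_nhds.sub tendsto_id) (by norm_num))
    simpa using h0.mono_left nhdsWithin_le_nhds
  · filter_upwards [Ioo_mem_nhdsGT_of_mem
      (show (0:ℝ) ∈ Ico (0:ℝ) (1/2) by constructor <;> norm_num)] with b hb
    exact mem_Ioi.2 (div_pos hb.1 (by simp only [mem_Ioo] at hb; linarith [hb.2]))

lemma tendsto_rpow_zero {p : ℝ} (hp : 0 < p) :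
    Tendsto (fun b : ℝ => b ^ p) (𝓝[>] (0:ℝ)) (𝓝 0) := by
  have h := (Real.continuousAt_rpow_const 0 p (Or.inr hp.le)).tendsto
  rw [Real.zero_rpow hp.ne'] at h
  exact h.mono_left nhdsWithin_le_nhds

lemma tendsto_T1 (hβ0 : 0 < β) (hβ1 : β < 1) (hα1 : 1 < α) (hα2 : α < 2) :
    Tendsto (fun b : ℝ => ∫ w in Ioi (b / (1 - b)), FI α β w) (𝓝[>] (0:ℝ))
      (𝓝 (∫ z in Ioi (0:ℝ), FI α β z)) := by
  have hq : |α - 1 - β| ≤ 1 := by rw [abs_le]; constructor <;> linarith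
  set K := β * |α - 1 - β| with hK
  have hKpos : 0 ≤ K := by positivity
  have hbound : ∀ c : ℝ, 0 < c →
      ‖(∫ w in Ioi c, FI α β w) - ∫ z in Ioi (0:ℝ), FI α β z‖ ≤ K / (2 - α) * c ^ (2 - α) := by
    intro c hc
    have hsplit : ∫ z in Ioi (0:ℝ), FI α β z
        = (∫ z in Ioc 0 c, FI α β z) + ∫ z in Ioi c, FI α β z := by
      rw [← setIntegral_union (Ioc_disjoint_Ioi le_rfl) measurableSet_Ioi
        ((integrableOn_FI hβ0 hβ1 hα1 hα2).mono_set Ioc_subset_Ioi_self)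
        ((integrableOn_FI hβ0 hβ1 hα1 hα2).mono_set (Ioi_subset_Ioi hc.le)),
        Ioc_union_Ioi_eq_Ioi hc.le]
    rw [hsplit]
    have h1 : ‖∫ z in Ioc 0 c, FI α β z‖ ≤ ∫ z in Ioc 0 c, K * z ^ (1 - α) := by
      refine (norm_integral_le_integral_norm _).trans ?_
      apply setIntegral_mono_on
      · exact ((integrableOn_FI hβ0 hβ1 hα1 hα2).mono_set Ioc_subset_Ioi_self).norm
      · have : IntegrableOn (fun x : ℝ => x ^ (1 - α)) (Ioc 0 c) := by
          rw [integrableOn_Ioc_iff_integrableOn_Ioo]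
          exact (intervalIntegral.integrableOn_Ioo_rpow_iff hc).2 (by linarith)
        exact this.const_mul K
      · exact measurableSet_Ioc
      · intro z hz
        exact FI_abs_le hβ0 hβ1.le hq hz.1
    have h2 : ∫ z in Ioc 0 c, K * z ^ (1 - α) = K / (2 - α) * c ^ (2 - α) := by
      rw [integral_const_mul, ← intervalIntegral.integral_of_le hc.le,
        integral_rpow (Or.inl (by linarith : (-1:ℝ) < 1 - α))]
      rw [show (1:ℝ) - α + 1 = 2 - α by ring, Real.zero_rpow (by linarith : (2:ℝ) - α ≠ 0)]
      ring
    calc ‖(∫ w in Ioi c, FI α β w) - ((∫ z in Ioc 0 c, FI α β z) + ∫ z in Ioi c, FI α β z)‖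
        = ‖∫ z in Ioc 0 c, FI α β z‖ := by rw [← norm_neg]; congr 1; ring
      _ ≤ K / (2 - α) * c ^ (2 - α) := h1.trans (le_of_eq h2)
  have hg : Tendsto (fun b : ℝ => K / (2 - α) * (b / (1 - b)) ^ (2 - α)) (𝓝[>] (0:ℝ)) (𝓝 0) := by
    have := ((tendsto_rpow_zero (show (0:ℝ) < 2 - α by linarith)).comp tendsto_c).const_mul
      (K / (2 - α))
    simpa using this
  have hsq : Tendsto (fun b : ℝ => (∫ w in Ioi (b / (1 - b)), FI α β w)
      - ∫ z in Ioi (0:ℝ), FI α β z) (𝓝[>] (0:ℝ)) (𝓝 0) := by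
    apply squeeze_zero_norm' _ hg
    filter_upwards [Ioo_mem_nhdsGT_of_mem
      (show (0:ℝ) ∈ Ico (0:ℝ) (1/2) by constructor <;> norm_num)] with b hb
    exact hbound _ (div_pos hb.1 (by simp only [mem_Ioo] at hb; linarith [hb.2]))
  simpa using hsq.add_const (∫ z in Ioi (0:ℝ), FI α β z)

lemma tendsto_T2 (hβ0 : 0 < β) (hβ1 : β < 1) (hα1 : 1 < α) (hα2 : α < 2) :
    Tendsto (fun b : ℝ => ∫ z in Ioc b (b / (1 - b)), fI α β z) (𝓝[>] (0:ℝ)) (𝓝 0) := by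
  have hg : Tendsto (fun b : ℝ => β / (α - 1) * b ^ (2 - α)) (𝓝[>] (0:ℝ)) (𝓝 0) := by
    have := (tendsto_rpow_zero (show (0:ℝ) < 2 - α by linarith)).const_mul (β / (α - 1))
    simpa using this
  apply squeeze_zero_norm' _ hg
  filter_upwards [Ioo_mem_nhdsGT_of_mem
    (show (0:ℝ) ∈ Ico (0:ℝ) (1/2) by constructor <;> norm_num)] with b hb
  obtain ⟨hb0, hb2⟩ := hb
  have hb1 : b < 1 := by linarith
  set c := b / (1 - b) with hcdef
  have h1b : (0:ℝ) < 1 - b := by linarith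
  have hc0 : 0 < c := div_pos hb0 h1b
  have hbc : b ≤ c := by rw [hcdef, le_div_iff₀ h1b]; nlinarith
  have hstep1 : ‖∫ z in Ioc b c, fI α β z‖ ≤ ∫ z in Ioc b c, β * z ^ (-α) := by
    refine (norm_integral_le_integral_norm _).trans ?_
    apply setIntegral_mono_on
    · exact ((integrableOn_fI_Ioi hβ0 hβ1.le hα1 hb0).mono_set Ioc_subset_Ioi_self).norm
    · exact ((integrableOn_Ioi_rpow_of_lt (by linarith : -α < -1) hb0).mono_set
        Ioc_subset_Ioi_self).const_mul β
    · exact measurableSet_Ioc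
    · intro z hz
      rw [Real.norm_eq_abs, abs_of_nonneg (fI_nonneg hβ0.le (hb0.trans hz.1))]
      exact fI_le hβ0.le hβ1.le (hb0.trans hz.1)
  refine hstep1.trans ?_
  have hcomp : ∫ z in Ioc b c, β * z ^ (-α) = β / (α - 1) * (b ^ (1 - α) - c ^ (1 - α)) := by
    rw [integral_const_mul, ← intervalIntegral.integral_of_le hbc,
      integral_rpow (Or.inr ⟨by intro h; exact (by linarith : α ≠ 1) (by linarith), by
        intro h
        rcases (mem_uIcc.1 h) with ⟨h1, _⟩ | ⟨h1, _⟩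
        · exact absurd h1 (not_le.2 hb0)
        · exact absurd h1 (not_le.2 hc0)⟩)]
    rw [show -α + 1 = 1 - α by ring,
      show (c ^ (1 - α) - b ^ (1 - α)) / (1 - α) = (b ^ (1 - α) - c ^ (1 - α)) / (α - 1) from by
        rw [div_eq_div_iff (sub_ne_zero.2 hα1.ne) (sub_ne_zero.2 hα1.ne')]; ring]
    ring
  rw [hcomp]
  have hkey : b ^ (1 - α) - c ^ (1 - α) ≤ b ^ (2 - α) := by
    have hcr : c ^ (1 - α) = b ^ (1 - α) / (1 - b) ^ (1 - α) := by
      rw [hcdef]; exact Real.div_rpow hb0.le h1b.le (1 - α)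
    have h1 : (1 - b) ^ (1 - α) * (1 - b) ≤ 1 := by
      have : (1 - b) ^ (1 - α) * (1 - b) = (1 - b) ^ (2 - α) := by
        nth_rewrite 2 [← Real.rpow_one (1 - b)]
        rw [← Real.rpow_add h1b, show 1 - α + 1 = 2 - α by ring]
      rw [this]
      exact Real.rpow_le_one h1b.le (by linarith) (by linarith)
    have hb1a : (0:ℝ) < b ^ (1 - α) := Real.rpow_pos_of_pos hb0 _
    have h1ba : (0:ℝ) < (1 - b) ^ (1 - α) := Real.rpow_pos_of_pos h1b _
    have h2 : b ^ (1 - α) * (1 - b) ≤ c ^ (1 - α) := by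
      rw [hcr, le_div_iff₀ h1ba]
      nlinarith
    have h3 : b ^ (2 - α) = b ^ (1 - α) * b := by
      nth_rewrite 3 [← Real.rpow_one b]
      rw [← Real.rpow_add hb0, show 1 - α + 1 = 2 - α by ring]
    nlinarith
  exact mul_le_mul_of_nonneg_left hkey (div_nonneg hβ0.le (by linarith))

lemma main_tendsto (hα1 : 1 < α) (hα2 : α < 2) (hβ0 : 0 < β) (hβ1 : β < 1) :
    Tendsto (fun b : ℝ =>
        ∫ z in {z : ℝ | -1 < z ∧ b < |z|}, (|1 + z| ^ β - 1) / |z| ^ (1 + α))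
      (𝓝[>] (0 : ℝ)) (𝓝 (∫ z in Ioi (0:ℝ), FI α β z)) := by
  have h := (tendsto_T1 hβ0 hβ1 hα1 hα2).add (tendsto_T2 hβ0 hβ1 hα1 hα2)
  rw [add_zero] at h
  apply h.congr'
  filter_upwards [Ioo_mem_nhdsGT_of_mem
    (show (0:ℝ) ∈ Ico (0:ℝ) (1/2) by constructor <;> norm_num)] with b hb
  exact (decomposition hβ0 hβ1 hα1 hα2 hb.1 hb.2).symm

end PVauxInternal

/-- For `α ∈ (1,2)`: if `β ∈ (α-1, 1)` the principal value integral
`P.V. ∫_{z ≥ -1} (|1+z|^β - 1)/|z|^{1+α} dz` is strictly positive, and if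
`β ∈ (0, α-1)` it is strictly negative. -/
theorem pv_integral_rpow_sub_one_sign (α β : ℝ) (hα1 : 1 < α) (hα2 : α < 2)
    (hβ0 : 0 < β) (hβ1 : β < 1) :
    (α - 1 < β → ∃ L : ℝ, 0 < L ∧
      Tendsto (fun b : ℝ =>
          ∫ z in {z : ℝ | -1 < z ∧ b < |z|}, (|1 + z| ^ β - 1) / |z| ^ (1 + α))
        (𝓝[>] (0 : ℝ)) (𝓝 L)) ∧
    (β < α - 1 → ∃ L : ℝ, L < 0 ∧
      Tendsto (fun b : ℝ =>
          ∫ z in {z : ℝ | -1 < z ∧ b < |z|}, (|1 + z| ^ β - 1) / |z| ^ (1 + α))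
        (𝓝[>] (0 : ℝ)) (𝓝 L)) := by
  have key := PVauxInternal.main_tendsto hα1 hα2 hβ0 hβ1
  constructor
  · intro h
    exact ⟨_, PVauxInternal.integral_FI_pos hβ0 hβ1 hα1 hα2 h, key⟩
  · intro h
    exact ⟨_, PVauxInternal.integral_FI_neg hβ0 hβ1 hα1 hα2 h, key⟩
end

section
/- For α ∈ (0,1), the principal value integral ∫_{z ≥ -1} ln(1+z)/|z|^{1+α} dz is strictly positive. -/
open MeasureTheory Filter Topology Set
open scoped ENNReal

noncomputable def pvF (α : ℝ) (z : ℝ) : ℝ := Real.log (1 + z) / |z| ^ (1 + α)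

lemma pvF_meas (α : ℝ) (hα1 : 0 < α) : Measurable (pvF α) :=
  (Real.measurable_log.comp (measurable_const.add measurable_id)).div
    ((Real.continuous_rpow_const (by linarith)).measurable.comp measurable_abs)

-- Piece 1 : (-1, -1/2]
lemma pvF_int1 (α : ℝ) (hα1 : 0 < α) (hα2 : α < 1) :
    IntegrableOn (pvF α) (Ioc (-1 : ℝ) (-2⁻¹)) := by
  have hbd : IntegrableOn (fun z : ℝ => 8 * (1 + z) ^ (-2⁻¹ : ℝ)) (Ioc (-1 : ℝ) (-2⁻¹)) := by
    have h0 : IntervalIntegrable (fun x : ℝ => x ^ (-2⁻¹ : ℝ)) volume 0 2⁻¹ :=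
      intervalIntegral.intervalIntegrable_rpow' (by norm_num)
    have h1 := (h0.comp_add_right 1).const_mul 8
    rw [intervalIntegrable_iff_integrableOn_Ioc_of_le (by norm_num)] at h1
    · convert h1 using 2 <;> norm_num [add_comm] <;> rfl
  refine (hbd.mono' ((pvF_meas α hα1).aestronglyMeasurable.restrict) ?_)
  filter_upwards [ae_restrict_mem measurableSet_Ioc] with z hz
  obtain ⟨hz1, hz2⟩ := hz
  have h1z : (0:ℝ) < 1 + z := by linarith
  have hlog : |Real.log (1 + z)| ≤ 2 * (1 + z) ^ (-2⁻¹ : ℝ) := by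
    have hle1 : 1 + z ≤ 1 := by linarith
    have hlogneg : Real.log (1 + z) ≤ 0 := Real.log_nonpos h1z.le hle1
    rw [abs_of_nonpos hlogneg]
    have : -Real.log (1 + z) = 2 * Real.log ((1 + z) ^ (-2⁻¹ : ℝ)) := by
      rw [Real.log_rpow h1z]; ring
    rw [this]
    have hpos : (0:ℝ) < (1 + z) ^ (-2⁻¹ : ℝ) := Real.rpow_pos_of_pos h1z _
    nlinarith [Real.log_le_sub_one_of_pos hpos]
  have hzabs : (2⁻¹ : ℝ) ≤ |z| := by
    rw [abs_of_nonpos (by linarith : z ≤ 0)]; linarith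
  have hden : (2⁻¹ : ℝ) ^ (1 + α) ≤ |z| ^ (1 + α) :=
    Real.rpow_le_rpow (by norm_num) hzabs (by linarith)
  have hden4 : (4 : ℝ)⁻¹ ≤ |z| ^ (1 + α) := by
    refine le_trans ?_ hden
    calc (4:ℝ)⁻¹ = (2⁻¹ : ℝ) ^ (2:ℝ) := by
          rw [show ((2:ℝ))⁻¹ ^ (2:ℝ) = ((2:ℝ)⁻¹) ^ (2:ℕ) by
            rw [← Real.rpow_natCast]; norm_num]; norm_num
      _ ≤ (2⁻¹ : ℝ) ^ (1 + α) :=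
          Real.rpow_le_rpow_of_exponent_ge (by norm_num) (by norm_num) (by linarith)
  have hdenpos : (0:ℝ) < |z| ^ (1 + α) := lt_of_lt_of_le (by norm_num) hden4
  rw [Real.norm_eq_abs, pvF, abs_div, abs_of_pos hdenpos, div_le_iff₀ hdenpos]
  have hrp : (0:ℝ) ≤ (1 + z) ^ (-2⁻¹ : ℝ) := (Real.rpow_pos_of_pos h1z _).le
  nlinarith [hlog, hden4, abs_nonneg (Real.log (1+z))]



lemma abs_rpow_int (α : ℝ) (hα1 : 0 < α) (hα2 : α < 1) :
    IntegrableOn (fun z : ℝ => |z| ^ (-α)) (Ioc (-2⁻¹ : ℝ) 2⁻¹) := by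
  have hR : IntegrableOn (fun x : ℝ => x ^ (-α)) (Ioc (0:ℝ) 2⁻¹) := by
    have := intervalIntegral.intervalIntegrable_rpow' (a := 0) (b := 2⁻¹) (r := -α)
      (by linarith)
    rwa [intervalIntegrable_iff_integrableOn_Ioc_of_le (by norm_num)] at this
  have hRabs : IntegrableOn (fun z : ℝ => |z| ^ (-α)) (Ioc (0:ℝ) 2⁻¹) := by
    refine hR.congr_fun (fun x hx => ?_) measurableSet_Ioc
    rw [abs_of_pos hx.1]
  have hL : IntegrableOn (fun z : ℝ => |z| ^ (-α)) (Ioc (-2⁻¹ : ℝ) 0) := by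
    have h0 : IntervalIntegrable (fun x : ℝ => x ^ (-α)) volume 0 2⁻¹ :=
      intervalIntegral.intervalIntegrable_rpow' (by linarith)
    have h1 : IntervalIntegrable (fun x : ℝ => (-x) ^ (-α)) volume (-2⁻¹ : ℝ) 0 := by
      have := (IntervalIntegrable.iff_comp_neg (f := fun x : ℝ => x ^ (-α))).mp h0
      simpa using this.symm
    rw [intervalIntegrable_iff_integrableOn_Ioc_of_le (by norm_num)] at h1
    refine h1.congr_fun (fun x hx => ?_) measurableSet_Ioc
    rw [abs_of_nonpos hx.2]
  have := hL.union hRabs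
  rwa [Ioc_union_Ioc_eq_Ioc (by norm_num) (by norm_num)] at this

lemma pvF_int2 (α : ℝ) (hα1 : 0 < α) (hα2 : α < 1) :
    IntegrableOn (pvF α) (Ioc (-2⁻¹ : ℝ) 2⁻¹) := by
  refine ((abs_rpow_int α hα1 hα2).const_mul 2).mono'
    ((pvF_meas α hα1).aestronglyMeasurable.restrict) ?_
  filter_upwards [ae_restrict_mem measurableSet_Ioc] with z hz
  obtain ⟨hz1, hz2⟩ := hz
  rcases eq_or_ne z 0 with rfl | hz0
  · simp only [pvF, add_zero, Real.log_one, zero_div, norm_zero]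
    positivity
  have hzpos : (0:ℝ) < |z| := abs_pos.mpr hz0
  have h1z : (0:ℝ) < 1 + z := by linarith
  have hlog : |Real.log (1 + z)| ≤ 2 * |z| := by
    rcases le_or_gt 0 z with hz | hz
    · rw [abs_of_nonneg (Real.log_nonneg (by linarith)), abs_of_nonneg hz]
      have := Real.log_le_sub_one_of_pos h1z
      linarith
    · rw [abs_of_nonpos (Real.log_nonpos h1z.le (by linarith)), abs_of_neg hz]
      have h2 : (0:ℝ) < (1+z)⁻¹ := by positivity
      have := Real.log_le_sub_one_of_pos h2
      rw [Real.log_inv] at this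
      have h3 : (1+z)⁻¹ ≤ 2 := by
        rw [inv_le_comm₀ h1z (by norm_num)]; linarith
      have h4 : (1+z) * (1+z)⁻¹ = 1 := mul_inv_cancel₀ h1z.ne'
      nlinarith
  have hdenpos : (0:ℝ) < |z| ^ (1 + α) := Real.rpow_pos_of_pos hzpos _
  rw [Real.norm_eq_abs, pvF, abs_div, abs_of_pos hdenpos, div_le_iff₀ hdenpos]
  have hkey : |z| ^ (-α) * |z| ^ (1 + α) = |z| := by
    rw [← Real.rpow_add hzpos]; norm_num
  nlinarith [hlog, hkey]



lemma pvF_int3 (α : ℝ) (hα1 : 0 < α) (hα2 : α < 1) :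
    IntegrableOn (pvF α) (Ioi (2⁻¹ : ℝ)) := by
  have hbd : IntegrableOn (fun z : ℝ => (6/α) * z ^ (-(1 + α/2))) (Ioi (2⁻¹ : ℝ)) := by
    exact ((integrableOn_Ioi_rpow_iff (by norm_num)).mpr
      (by linarith : -(1 + α/2) < -1)).const_mul _
  refine hbd.mono' ((pvF_meas α hα1).aestronglyMeasurable.restrict) ?_
  filter_upwards [ae_restrict_mem measurableSet_Ioi] with z hz
  simp only [mem_Ioi] at hz
  have hz0 : (0:ℝ) < z := by linarith
  have h1z : (1:ℝ) < 1 + z := by linarith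
  have hlogpos : 0 ≤ Real.log (1 + z) := Real.log_nonneg h1z.le
  -- log (1+z) ≤ (2/α) * (1+z)^(α/2)
  have hlog : Real.log (1 + z) ≤ (2/α) * (1 + z) ^ (α/2) := by
    have h : Real.log (1 + z) = (2/α) * Real.log ((1 + z) ^ (α/2)) := by
      rw [Real.log_rpow (by linarith)]
      field_simp
    rw [h]
    have hp : (0:ℝ) < (1 + z) ^ (α/2) := Real.rpow_pos_of_pos (by linarith) _
    have := Real.log_le_sub_one_of_pos hp
    have h2 : (0:ℝ) < 2/α := by positivity
    nlinarith
  -- (1+z)^(α/2) ≤ 3 * z^(α/2)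
  have hpow : (1 + z) ^ (α/2) ≤ 3 * z ^ (α/2) := by
    have h13 : (1 + z) ≤ 3 * z := by linarith
    calc (1 + z) ^ (α/2) ≤ (3*z) ^ (α/2) :=
          Real.rpow_le_rpow (by linarith) h13 (by linarith)
      _ = 3 ^ (α/2) * z ^ (α/2) := Real.mul_rpow (by norm_num) hz0.le
      _ ≤ 3 * z ^ (α/2) := by
          have : (3:ℝ) ^ (α/2) ≤ 3 ^ (1:ℝ) :=
            Real.rpow_le_rpow_of_exponent_le (by norm_num) (by linarith)
          have hzp : (0:ℝ) ≤ z ^ (α/2) := (Real.rpow_pos_of_pos hz0 _).le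
          rw [Real.rpow_one] at this
          nlinarith
  have hdenpos : (0:ℝ) < |z| ^ (1 + α) := Real.rpow_pos_of_pos (abs_pos.mpr hz0.ne') _
  rw [Real.norm_eq_abs, pvF, abs_div, abs_of_pos hdenpos, div_le_iff₀ hdenpos,
    abs_of_nonneg hlogpos, abs_of_pos hz0]
  have hkey : z ^ (-(1 + α/2)) * z ^ (1 + α) = z ^ (α/2) := by
    rw [← Real.rpow_add hz0]; ring_nf
  have h2a : (0:ℝ) < 2/α := by positivity
  calc Real.log (1 + z) ≤ (2/α) * (1 + z) ^ (α/2) := hlog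
    _ ≤ (2/α) * (3 * z ^ (α/2)) := by nlinarith
    _ = (6/α) * (z ^ (-(1 + α/2)) * z ^ (1 + α)) := by rw [hkey]; ring
    _ = (6/α) * z ^ (-(1 + α/2)) * z ^ (1 + α) := by ring





lemma pvF_int (α : ℝ) (hα1 : 0 < α) (hα2 : α < 1) :
    IntegrableOn (pvF α) (Ioi (-1 : ℝ)) := by
  have h12 := (pvF_int1 α hα1 hα2).union (pvF_int2 α hα1 hα2)
  rw [Ioc_union_Ioc_eq_Ioc (by norm_num) (by norm_num)] at h12
  have h := h12.union (pvF_int3 α hα1 hα2)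
  rwa [Ioc_union_Ioi_eq_Ioi (by norm_num)] at h





noncomputable def pvφ (z : ℝ) : ℝ := -(z / (1 + z))

lemma pvφ_deriv {z : ℝ} (hz : z ∈ Ioi (0:ℝ)) :
    HasDerivWithinAt pvφ (-1 / (1 + z) ^ 2) (Ioi (0:ℝ)) z := by
  have h1z : (1 : ℝ) + z ≠ 0 := by simp only [mem_Ioi] at hz; positivity
  have h : HasDerivAt pvφ (-1 / (1 + z) ^ 2) z := by
    have h1 : HasDerivAt (fun z : ℝ => 1 + z) 1 z := (hasDerivAt_id z).const_add 1
    have h2 := h1.inv h1z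
    have h3 : HasDerivAt (fun z : ℝ => -1 + (1 + z)⁻¹) (-1 / (1 + z) ^ 2) z := by
      simpa [neg_div] using h2.const_add (-1)
    refine h3.congr_of_eventuallyEq ?_
    filter_upwards [eventually_ne_nhds (by simpa using (by intro h; exact h1z (by linarith) : z ≠ -1))] with x hx
    have : (1:ℝ) + x ≠ 0 := fun h => hx (by linarith)
    field_simp [pvφ]
    rw [pvφ]; field_simp; ring
  exact h.hasDerivWithinAt

lemma pvφ_image : pvφ '' Ioi (0:ℝ) = Ioo (-1 : ℝ) 0 := by
  ext y
  simp only [mem_image, mem_Ioi, mem_Ioo]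
  constructor
  · rintro ⟨z, hz, rfl⟩
    have h1z : (0:ℝ) < 1 + z := by linarith
    constructor
    · rw [pvφ, neg_lt, neg_neg]
      rw [div_lt_one h1z]; linarith
    · rw [pvφ, neg_lt_zero]
      positivity
  · rintro ⟨hy1, hy2⟩
    refine ⟨-y / (1 + y), ?_, ?_⟩
    · have h1y : (0:ℝ) < 1 + y := by linarith
      have : (0:ℝ) < -y := by linarith
      positivity
    · have h1y : (1:ℝ) + y ≠ 0 := by intro h; linarith [h]
      rw [pvφ]
      field_simp
      ring

lemma pvφ_inj : InjOn pvφ (Ioi (0:ℝ)) := by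
  intro a ha b hb h
  simp only [mem_Ioi] at ha hb
  have h1a : (1:ℝ) + a ≠ 0 := by positivity
  have h1b : (1:ℝ) + b ≠ 0 := by positivity
  rw [pvφ, pvφ, neg_inj, div_eq_div_iff (by positivity) (by positivity)] at h
  nlinarith

noncomputable def pvH (α : ℝ) (z : ℝ) : ℝ :=
  Real.log (1 + z) * (1 + z) ^ (α - 1) / z ^ (1 + α)

lemma pv_smul_eq (α : ℝ) {z : ℝ} (hz : z ∈ Ioi (0:ℝ)) :
    |(-1 : ℝ) / (1 + z) ^ 2| • pvF α (pvφ z) = -pvH α z := by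
  simp only [mem_Ioi] at hz
  have h1z : (0:ℝ) < 1 + z := by linarith
  have habs : |(-1 : ℝ) / (1 + z) ^ 2| = ((1 + z) ^ 2)⁻¹ := by
    rw [abs_div, abs_neg, abs_one, abs_of_pos (by positivity)]
    exact one_div _
  have h1φ : 1 + pvφ z = (1 + z)⁻¹ := by
    rw [pvφ]; field_simp; ring
  have hφabs : |pvφ z| = z / (1 + z) := by
    rw [pvφ, abs_neg, abs_of_pos (by positivity)]
  rw [smul_eq_mul, habs, pvF, h1φ, Real.log_inv, hφabs,
    Real.div_rpow hz.le h1z.le, pvH]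
  have hkey2 : (1 + z) ^ (1 + α) = (1 + z) ^ (α - 1) * (1 + z) ^ 2 := by
    rw [show ((1+z)^2 : ℝ) = (1+z) ^ (2:ℝ) by
      rw [← Real.rpow_natCast (1+z) 2]; norm_num]
    rw [← Real.rpow_add h1z]
    norm_num
    ring_nf
  rw [hkey2]
  have h2 : ((1+z)^2 : ℝ) ≠ 0 := by positivity
  have hne : z ^ (1+α) ≠ 0 := by positivity
  field_simp

noncomputable def pvG (α : ℝ) (z : ℝ) : ℝ := Real.log (1 + z) / z ^ (1 + α)

lemma pvGH_pos (α : ℝ) (hα1 : 0 < α) (hα2 : α < 1) {z : ℝ} (hz : 0 < z) :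
    0 < pvG α z - pvH α z := by
  have h1z : (1:ℝ) < 1 + z := by linarith
  have hlog : 0 < Real.log (1 + z) := Real.log_pos h1z
  have hzp : (0:ℝ) < z ^ (1 + α) := Real.rpow_pos_of_pos hz _
  have hrp : (1 + z) ^ (α - 1) < 1 :=
    Real.rpow_lt_one_of_one_lt_of_neg h1z (by linarith)
  have hrp0 : (0:ℝ) < (1 + z) ^ (α - 1) := Real.rpow_pos_of_pos (by linarith) _
  rw [pvG, pvH]
  rw [div_sub_div_same, lt_div_iff₀ hzp]
  nlinarith

lemma pv_pos (α : ℝ) (hα1 : 0 < α) (hα2 : α < 1) :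
    0 < ∫ z in Ioi (-1 : ℝ), pvF α z := by
  have hI := pvF_int α hα1 hα2
  have hIneg : IntegrableOn (pvF α) (Ioc (-1 : ℝ) 0) :=
    hI.mono_set (fun z hz => hz.1)
  have hIpos : IntegrableOn (pvF α) (Ioi (0 : ℝ)) :=
    hI.mono_set (fun z hz => lt_trans (by norm_num : (-1:ℝ) < 0) hz)
  -- split
  have hsplit : (∫ z in Ioi (-1 : ℝ), pvF α z) =
      (∫ z in Ioc (-1 : ℝ) 0, pvF α z) + ∫ z in Ioi (0:ℝ), pvF α z := by
    rw [← setIntegral_union (Ioc_disjoint_Ioi le_rfl) measurableSet_Ioi hIneg hIpos,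
      Ioc_union_Ioi_eq_Ioi (by norm_num)]
  -- change of variables on negative part
  have hchange : (∫ z in Ioo (-1 : ℝ) 0, pvF α z) = ∫ z in Ioi (0:ℝ), -pvH α z := by
    rw [← pvφ_image,
      integral_image_eq_integral_abs_deriv_smul measurableSet_Ioi
        (fun x hx => pvφ_deriv hx) pvφ_inj (pvF α)]
    exact setIntegral_congr_fun measurableSet_Ioi (fun z hz => pv_smul_eq α hz)
  -- integrability of pvH on Ioi 0
  have hHint : IntegrableOn (pvH α) (Ioi (0:ℝ)) := by
    have h1 : IntegrableOn (pvF α) (pvφ '' Ioi (0:ℝ)) := by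
      rw [pvφ_image]; exact hI.mono_set (fun z hz => hz.1)
    rw [integrableOn_image_iff_integrableOn_abs_deriv_smul measurableSet_Ioi
      (fun x hx => pvφ_deriv hx) pvφ_inj] at h1
    have h2 := h1.congr_fun (fun z hz => pv_smul_eq α hz) measurableSet_Ioi
    have h3 := h2.neg
    refine h3.congr (Filter.Eventually.of_forall fun z => ?_)
    simp
  -- negative part
  have hneg : (∫ z in Ioc (-1 : ℝ) 0, pvF α z) = -∫ z in Ioi (0:ℝ), pvH α z := by
    rw [MeasureTheory.integral_Ioc_eq_integral_Ioo, hchange, integral_neg]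
  -- positive part
  have hGeq : EqOn (pvF α) (pvG α) (Ioi (0:ℝ)) := by
    intro z hz
    simp only [mem_Ioi] at hz
    rw [pvF, pvG, abs_of_pos hz]
  have hGint : IntegrableOn (pvG α) (Ioi (0:ℝ)) :=
    hIpos.congr_fun hGeq measurableSet_Ioi
  have hpos : (∫ z in Ioi (0:ℝ), pvF α z) = ∫ z in Ioi (0:ℝ), pvG α z :=
    setIntegral_congr_fun measurableSet_Ioi hGeq
  -- combine
  rw [hsplit, hneg, hpos, neg_add_eq_sub, ← integral_sub hGint hHint]
  -- strict positivity
  have hnn : 0 ≤ᵐ[volume.restrict (Ioi (0:ℝ))] (pvG α - pvH α) := by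
    filter_upwards [ae_restrict_mem measurableSet_Ioi] with z hz
    simp only [mem_Ioi] at hz
    have := pvGH_pos α hα1 hα2 hz
    simp only [Pi.sub_apply, Pi.zero_apply]
    linarith
  have hintsub : (∫ z in Ioi (0:ℝ), (pvG α z - pvH α z)) = ∫ z in Ioi (0:ℝ), (pvG α - pvH α) z := by
    simp
  rw [hintsub, setIntegral_pos_iff_support_of_nonneg_ae hnn (by exact (hGint.sub hHint))]
  · refine lt_of_lt_of_le (b := volume (Ioi (0:ℝ))) ?_ (measure_mono ?_)
    · rw [Real.volume_Ioi]; norm_num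
    · intro z hz
      simp only [mem_Ioi] at hz
      refine ⟨?_, hz⟩
      simp only [Function.mem_support]
      have := pvGH_pos α hα1 hα2 hz
      intro h
      rw [Pi.sub_apply] at h
      linarith





lemma pvF_tendsto (α : ℝ) (hα1 : 0 < α) (hα2 : α < 1) :
    Tendsto (fun b : ℝ => ∫ z in {z : ℝ | -1 < z ∧ b < |z|}, pvF α z)
      (𝓝[>] (0 : ℝ)) (𝓝 (∫ z in Ioi (-1 : ℝ), pvF α z)) := by
  set L := ∫ z in Ioi (-1 : ℝ), pvF α z with hL
  have hI := pvF_int α hα1 hα2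
  have hIcc : IntegrableOn (pvF α) (Icc (-2⁻¹ : ℝ) 2⁻¹) :=
    hI.mono_set (fun x hx => lt_of_lt_of_le (by norm_num) hx.1)
  -- the primitive
  set F : ℝ → ℝ := fun x => ∫ t in (-2⁻¹ : ℝ)..x, pvF α t with hF
  have hcont : ContinuousOn F (Icc (-2⁻¹ : ℝ) 2⁻¹) := by
    have := intervalIntegral.continuousOn_primitive_interval
      (a := (-2⁻¹ : ℝ)) (b := (2⁻¹ : ℝ)) (μ := volume) (f := pvF α)
      (by rwa [uIcc_of_le (by norm_num)])
    rwa [uIcc_of_le (by norm_num)] at this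
  have hmem : Ioo (0:ℝ) 2⁻¹ ∈ 𝓝[>] (0:ℝ) :=
    mem_nhdsWithin.mpr ⟨Iio 2⁻¹, isOpen_Iio, by norm_num, fun x hx => ⟨hx.2, hx.1⟩⟩
  -- eventual equality
  have heq : ∀ᶠ b in 𝓝[>] (0:ℝ),
      (∫ z in {z : ℝ | -1 < z ∧ b < |z|}, pvF α z) = L - (F b - F (-b)) := by
    filter_upwards [hmem] with b hb
    obtain ⟨hb0, hb2⟩ := hb
    have hSmeas : MeasurableSet {z : ℝ | -1 < z ∧ b < |z|} :=
      (measurableSet_lt measurable_const measurable_id).inter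
        (measurableSet_lt measurable_const measurable_abs)
    have hunion : {z : ℝ | -1 < z ∧ b < |z|} ∪ Icc (-b) b = Ioi (-1 : ℝ) := by
      ext z
      simp only [mem_union, mem_setOf_eq, mem_Icc, mem_Ioi]
      constructor
      · rintro (⟨h, _⟩ | ⟨h1, h2⟩) <;> [exact h; linarith]
      · intro h
        rcases le_or_gt |z| b with habs | habs
        · exact Or.inr ⟨neg_le_of_abs_le habs, le_of_abs_le habs⟩
        · exact Or.inl ⟨h, habs⟩
    have hdisj : Disjoint {z : ℝ | -1 < z ∧ b < |z|} (Icc (-b) b) := by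
      rw [disjoint_left]
      rintro z ⟨_, h2⟩ ⟨h3, h4⟩
      exact absurd (abs_le.mpr ⟨h3, h4⟩) (not_le.mpr h2)
    have hint1 : IntegrableOn (pvF α) {z : ℝ | -1 < z ∧ b < |z|} :=
      hI.mono_set (fun z hz => hz.1)
    have hint2 : IntegrableOn (pvF α) (Icc (-b) b) :=
      hIcc.mono_set (fun z hz => ⟨by linarith [hz.1], by linarith [hz.2]⟩)
    have := setIntegral_union hdisj measurableSet_Icc hint1 hint2
    rw [hunion] at this
    rw [hL, this]
    have hIcc_int : (∫ z in Icc (-b) b, pvF α z) = F b - F (-b) := by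
      rw [MeasureTheory.integral_Icc_eq_integral_Ioc,
        ← intervalIntegral.integral_of_le (by linarith : -b ≤ b)]
      rw [hF]
      rw [← intervalIntegral.integral_interval_sub_left
        (hIcc.mono_set ?_).intervalIntegrable (hIcc.mono_set ?_).intervalIntegrable]
      · intro x hx
        rw [uIcc_of_le (by linarith)] at hx
        exact ⟨hx.1, by linarith [hx.2, hb2]⟩
      · intro x hx
        rw [uIcc_of_le (by linarith)] at hx
        exact ⟨hx.1, by linarith [hx.2, hb0]⟩
    rw [hIcc_int]; ring
  -- the limit
  have h0mem : (0:ℝ) ∈ Icc (-2⁻¹ : ℝ) 2⁻¹ := by norm_num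
  have hcw : Tendsto F (𝓝[Icc (-2⁻¹ : ℝ) 2⁻¹] 0) (𝓝 (F 0)) := hcont 0 h0mem
  have htend1 : Tendsto (fun b : ℝ => F b) (𝓝[>] (0:ℝ)) (𝓝 (F 0)) := by
    refine hcw.comp (tendsto_nhdsWithin_iff.mpr ⟨?_, ?_⟩)
    · exact tendsto_id.mono_left nhdsWithin_le_nhds
    · filter_upwards [hmem] with b hb
      exact ⟨by linarith [hb.1], hb.2.le⟩
  have htend2 : Tendsto (fun b : ℝ => F (-b)) (𝓝[>] (0:ℝ)) (𝓝 (F 0)) := by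
    refine hcw.comp (tendsto_nhdsWithin_iff.mpr ⟨?_, ?_⟩)
    · have : Tendsto (fun b : ℝ => -b) (𝓝 (0:ℝ)) (𝓝 (-0)) := tendsto_neg _
      rw [neg_zero] at this
      exact this.mono_left nhdsWithin_le_nhds
    · filter_upwards [hmem] with b hb
      exact ⟨by linarith [hb.2], by linarith [hb.1]⟩
  have : Tendsto (fun b : ℝ => L - (F b - F (-b))) (𝓝[>] (0:ℝ)) (𝓝 (L - (F 0 - F 0))) :=
    tendsto_const_nhds.sub (htend1.sub htend2)
  rw [sub_self, sub_zero] at this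
  exact Tendsto.congr' (Filter.EventuallyEq.symm heq) this


/-- For `α ∈ (0,1)`, the principal value integral
`P.V. ∫_{z ≥ -1} ln(1+z)/|z|^{1+α} dz` is strictly positive. -/
theorem pv_integral_log_pos (α : ℝ) (hα1 : 0 < α) (hα2 : α < 1) :
    ∃ L : ℝ, 0 < L ∧
      Tendsto (fun b : ℝ =>
          ∫ z in {z : ℝ | -1 < z ∧ b < |z|}, Real.log (1 + z) / |z| ^ (1 + α))
        (𝓝[>] (0 : ℝ)) (𝓝 L) := by
  exact ⟨∫ z in Ioi (-1 : ℝ), pvF α z, pv_pos α hα1 hα2, pvF_tendsto α hα1 hα2⟩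
end

section
/- Let α ∈ (1,2), β = α - 1. Define B(a) = ∫_{-a-1}^{-a} (|1+z|^β - 1)/|z|^{1+α} dz for a > 1, and G = P.V. ∫_{-1}^{1} (|1+z|^β + |1-z|^β - 2)/|z|^{1+α} dz. Then B(2) < -G/2. -/
open MeasureTheory Filter Topology

open Set

private lemma rpow_split {α u : ℝ} (hα : 1 < α) (hu : 0 ≤ u) :
    u ^ α = u ^ (α - 1) * u := by
  rcases eq_or_lt_of_le hu with rfl | hu'
  · have h1 : (α:ℝ) ≠ 0 := by positivity
    have h2 : (α - 1:ℝ) ≠ 0 := by intro h; rw [sub_eq_zero] at h; exact absurd h.symm hα.ne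
    rw [Real.zero_rpow h1, Real.zero_rpow h2, mul_zero]
  · rw [← Real.rpow_add_one hu'.ne' (α - 1)]; norm_num

private lemma hasDeriv_K {α β : ℝ} (hα1 : 1 < α) (hβ : β = α - 1) {z : ℝ} (hz : z < -1) :
    HasDerivAt (fun z : ℝ => -(1/α) * (((-1 - z) ^ α + 1) * (-z) ^ (-α)))
      ((|1 + z| ^ β - 1) / |z| ^ (1 + α)) z := by
  have hu : (0:ℝ) < -1 - z := by linarith
  have hv : (0:ℝ) < -z := by linarith
  have h1 : HasDerivAt (fun z : ℝ => -1 - z) (-1) z := (hasDerivAt_id z).const_sub (-1)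
  have h2 : HasDerivAt (fun z : ℝ => (-1 - z) ^ α) (-1 * α * (-1 - z) ^ (α - 1)) z :=
    h1.rpow_const (Or.inl hu.ne')
  have h3 : HasDerivAt (fun z : ℝ => (-z) ^ (-α)) (-1 * (-α) * (-z) ^ (-α - 1)) z :=
    (hasDerivAt_id z).neg.rpow_const (Or.inl hv.ne')
  have h4 := ((h2.add_const 1).mul h3).const_mul (-(1/α))
  convert h4 using 1
  · rfl
  · rfl
  · rfl
  have habs1 : |1 + z| = -1 - z := by rw [abs_of_neg (by linarith)]; ring
  have habs2 : |z| = -z := abs_of_neg (by linarith)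
  have e1 : (-z : ℝ) ^ (-α) = (-z) * ((-z) ^ (1+α))⁻¹ := by
    rw [show (-α : ℝ) = 1 + -(1+α) by ring, Real.rpow_add hv, Real.rpow_one,
      Real.rpow_neg hv.le]
  have e2 : (-z : ℝ) ^ (-α - 1) = ((-z) ^ (1+α))⁻¹ := by
    rw [show (-α - 1 : ℝ) = -(1+α) by ring, Real.rpow_neg hv.le]
  have e3 : (-1 - z : ℝ) ^ α = (-1 - z) ^ (α - 1) * (-1 - z) := rpow_split hα1 hu.le
  have hαne : (α:ℝ) ≠ 0 := by positivity
  have hvne : ((-z : ℝ) ^ (1+α)) ≠ 0 := (Real.rpow_pos_of_pos hv _).ne'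
  rw [habs1, habs2, hβ, e1, e2, e3]
  field_simp
  ring

private lemma hasDeriv_Phi {α β : ℝ} (hα1 : 1 < α) (hβ : β = α - 1) {z : ℝ}
    (hz0 : 0 < z) (hz1 : z ≤ 1) :
    HasDerivAt (fun z : ℝ => -(1/α) * (z ^ (-α) * ((1 + z) ^ α + (1 - z) ^ α - 2)))
      ((|1 + z| ^ β + |1 - z| ^ β - 2) / |z| ^ (1 + α)) z := by
  have hu : (0:ℝ) < 1 + z := by linarith
  have hw : (0:ℝ) ≤ 1 - z := by linarith
  have h1 : HasDerivAt (fun z : ℝ => z ^ (-α)) (1 * (-α) * z ^ (-α - 1)) z :=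
    (hasDerivAt_id z).rpow_const (Or.inl hz0.ne')
  have h2 : HasDerivAt (fun z : ℝ => (1 + z) ^ α) (1 * α * (1 + z) ^ (α - 1)) z :=
    ((hasDerivAt_id z).const_add 1).rpow_const (Or.inl hu.ne')
  have h3 : HasDerivAt (fun z : ℝ => (1 - z) ^ α) (-1 * α * (1 - z) ^ (α - 1)) z :=
    ((hasDerivAt_id z).const_sub 1).rpow_const (Or.inr hα1.le)
  have h4 := (h1.mul ((h2.add h3).sub_const 2)).const_mul (-(1/α))
  convert h4 using 1
  · rfl
  · rfl
  · rfl
  have habs1 : |1 + z| = 1 + z := abs_of_pos hu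
  have habs2 : |1 - z| = 1 - z := abs_of_nonneg hw
  have habs3 : |z| = z := abs_of_pos hz0
  have e1 : (z : ℝ) ^ (-α) = z * (z ^ (1+α))⁻¹ := by
    rw [show (-α : ℝ) = 1 + -(1+α) by ring, Real.rpow_add hz0, Real.rpow_one,
      Real.rpow_neg hz0.le]
  have e2 : (z : ℝ) ^ (-α - 1) = (z ^ (1+α))⁻¹ := by
    rw [show (-α - 1 : ℝ) = -(1+α) by ring, Real.rpow_neg hz0.le]
  have e3 : (1 + z : ℝ) ^ α = (1 + z) ^ (α - 1) * (1 + z) := rpow_split hα1 hu.le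
  have e4 : (1 - z : ℝ) ^ α = (1 - z) ^ (α - 1) * (1 - z) := rpow_split hα1 hw
  have hαne : (α:ℝ) ≠ 0 := by positivity
  have hvne : ((z : ℝ) ^ (1+α)) ≠ 0 := (Real.rpow_pos_of_pos hz0 _).ne'
  simp only [Pi.add_apply]
  rw [habs1, habs2, habs3, hβ, e1, e2, e3, e4]
  field_simp
  ring

private lemma hasDeriv_Psi {α β : ℝ} (hα1 : 1 < α) (hβ : β = α - 1) {z : ℝ}
    (hz0 : -1 ≤ z) (hz1 : z < 0) :
    HasDerivAt (fun z : ℝ => (1/α) * ((-z) ^ (-α) * ((1 + z) ^ α + (1 - z) ^ α - 2)))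
      ((|1 + z| ^ β + |1 - z| ^ β - 2) / |z| ^ (1 + α)) z := by
  have hu : (0:ℝ) ≤ 1 + z := by linarith
  have hw : (0:ℝ) < 1 - z := by linarith
  have hv : (0:ℝ) < -z := by linarith
  have h1 : HasDerivAt (fun z : ℝ => (-z) ^ (-α)) (-1 * (-α) * (-z) ^ (-α - 1)) z :=
    (hasDerivAt_id z).neg.rpow_const (Or.inl hv.ne')
  have h2 : HasDerivAt (fun z : ℝ => (1 + z) ^ α) (1 * α * (1 + z) ^ (α - 1)) z :=
    ((hasDerivAt_id z).const_add 1).rpow_const (Or.inr hα1.le)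
  have h3 : HasDerivAt (fun z : ℝ => (1 - z) ^ α) (-1 * α * (1 - z) ^ (α - 1)) z :=
    ((hasDerivAt_id z).const_sub 1).rpow_const (Or.inl hw.ne')
  have h4 := (h1.mul ((h2.add h3).sub_const 2)).const_mul (1/α)
  convert h4 using 1
  · rfl
  · rfl
  · rfl
  have habs1 : |1 + z| = 1 + z := abs_of_nonneg hu
  have habs2 : |1 - z| = 1 - z := abs_of_pos hw
  have habs3 : |z| = -z := abs_of_neg hz1
  have e1 : (-z : ℝ) ^ (-α) = (-z) * ((-z) ^ (1+α))⁻¹ := by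
    rw [show (-α : ℝ) = 1 + -(1+α) by ring, Real.rpow_add hv, Real.rpow_one,
      Real.rpow_neg hv.le]
  have e2 : (-z : ℝ) ^ (-α - 1) = ((-z) ^ (1+α))⁻¹ := by
    rw [show (-α - 1 : ℝ) = -(1+α) by ring, Real.rpow_neg hv.le]
  have e3 : (1 + z : ℝ) ^ α = (1 + z) ^ (α - 1) * (1 + z) := rpow_split hα1 hu
  have e4 : (1 - z : ℝ) ^ α = (1 - z) ^ (α - 1) * (1 - z) := rpow_split hα1 hw.le
  have hαne : (α:ℝ) ≠ 0 := by positivity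
  have hvne : ((-z : ℝ) ^ (1+α)) ≠ 0 := (Real.rpow_pos_of_pos hv _).ne'
  simp only [Pi.add_apply]
  rw [habs1, habs2, habs3, hβ, e1, e2, e3, e4]
  field_simp
  ring

private lemma contOn_f {α β : ℝ} (hβ0 : 0 < β) {s : Set ℝ} (hs : ∀ x ∈ s, x ≠ 0) :
    ContinuousOn (fun z : ℝ => (|1 + z| ^ β + |1 - z| ^ β - 2) / |z| ^ (1 + α)) s := by
  apply ContinuousOn.div
  · apply ContinuousOn.sub _ continuousOn_const
    apply ContinuousOn.add
    · exact ((continuous_abs.comp (by continuity)).continuousOn).rpow_const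
        (fun x _ => Or.inr hβ0.le)
    · exact ((continuous_abs.comp (by continuity)).continuousOn).rpow_const
        (fun x _ => Or.inr hβ0.le)
  · exact (continuous_abs.continuousOn).rpow_const
      (fun x hx => Or.inl (abs_ne_zero.2 (hs x hx)))
  · intro x hx
    exact (Real.rpow_pos_of_pos (abs_pos.2 (hs x hx)) _).ne'

private lemma contOn_g {α β : ℝ} (hβ0 : 0 < β) {s : Set ℝ} (hs : ∀ x ∈ s, x ≠ 0) :
    ContinuousOn (fun z : ℝ => (|1 + z| ^ β - 1) / |z| ^ (1 + α)) s := by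
  apply ContinuousOn.div
  · exact (((continuous_abs.comp (by continuity)).continuousOn).rpow_const
        (fun x _ => Or.inr hβ0.le)).sub continuousOn_const
  · exact (continuous_abs.continuousOn).rpow_const
      (fun x hx => Or.inl (abs_ne_zero.2 (hs x hx)))
  · intro x hx
    exact (Real.rpow_pos_of_pos (abs_pos.2 (hs x hx)) _).ne'

private lemma g_bounds {α : ℝ} (hα1 : 1 < α) (hα2 : α < 2) {b : ℝ} (hb0 : 0 < b)
    (hb1 : b < 1) :
    0 ≤ (1+b)^α + (1-b)^α - 2 ∧ (1+b)^α + (1-b)^α - 2 ≤ 2*b^2 := by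
  constructor
  · have l1 : 1 + α * b ≤ (1+b)^α :=
      one_add_mul_self_le_rpow_one_add (by linarith) hα1.le
    have l2 : 1 + α * (-b) ≤ (1 + -b)^α :=
      one_add_mul_self_le_rpow_one_add (by linarith) hα1.le
    rw [show (1 + -b : ℝ) = 1 - b by ring] at l2
    linarith
  · have u1 : (1+b)^(α-1) ≤ 1 + (α-1) * b :=
      rpow_one_add_le_one_add_mul_self (by linarith) (by linarith) (by linarith)
    have u2 : (1 + -b)^(α-1) ≤ 1 + (α-1) * (-b) :=
      rpow_one_add_le_one_add_mul_self (by linarith) (by linarith) (by linarith)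
    rw [show (1 + -b : ℝ) = 1 - b by ring] at u2
    have e1 : (1+b:ℝ)^α = (1+b)^(α-1) * (1+b) := rpow_split hα1 (by linarith)
    have e2 : (1-b:ℝ)^α = (1-b)^(α-1) * (1-b) := rpow_split hα1 (by linarith)
    have m1 : (1+b:ℝ)^(α-1) * (1+b) ≤ (1 + (α-1)*b) * (1+b) :=
      mul_le_mul_of_nonneg_right u1 (by linarith)
    have m2 : (1-b:ℝ)^(α-1) * (1-b) ≤ (1 + (α-1)*(-b)) * (1-b) :=
      mul_le_mul_of_nonneg_right u2 (by linarith)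
    rw [e1, e2]
    nlinarith [sq_nonneg b]

private lemma key_ineq {α : ℝ} (hα1 : 1 < α) (hα2 : α < 2) :
    ((2:ℝ)^α + 1) * 3^(-α) - 2 * 2^(-α) < 2^α - 2 := by
  have k1 : (2:ℝ)^α * 3^(-α) = (2/3:ℝ)^α := by
    rw [Real.div_rpow (by norm_num) (by norm_num), Real.rpow_neg (by norm_num), div_eq_mul_inv]
  have k2 : (2/3:ℝ)^α < 2/3 := by
    have := Real.rpow_lt_rpow_of_exponent_gt (by norm_num : (0:ℝ) < 2/3)
      (by norm_num : (2/3:ℝ) < 1) hα1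
    simpa using this
  have k3 : (3:ℝ)^(-α) < 1/3 := by
    have := Real.rpow_lt_rpow_of_exponent_lt (by norm_num : (1:ℝ) < 3)
      (by linarith : -α < -1)
    rw [Real.rpow_neg_one] at this
    linarith
  have k4 : 3 ≤ (2:ℝ)^α + 2 * 2^(-α) := by
    set t := (2:ℝ)^(α-1) with ht
    have ht1 : 1 < t := by
      have := Real.rpow_lt_rpow_of_exponent_lt (by norm_num : (1:ℝ) < 2)
        (by linarith : (0:ℝ) < α - 1)
      simpa using this
    have ht0 : 0 < t := by linarith
    have h2α : (2:ℝ)^α = 2*t := by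
      rw [show α = 1 + (α-1) by ring, Real.rpow_add (by norm_num), Real.rpow_one]
    have h2negα : 2 * (2:ℝ)^(-α) = t⁻¹ := by
      rw [Real.rpow_neg (by norm_num), h2α]
      field_simp
    rw [h2α, h2negα]
    have key' : 2*t + t⁻¹ - 3 = (2*t-1)*(t-1)*t⁻¹ := by field_simp; ring
    have : 0 ≤ (2*t-1)*(t-1)*t⁻¹ :=
      mul_nonneg (mul_nonneg (by linarith) (by linarith)) (inv_nonneg.2 ht0.le)
    linarith
  have expand : ((2:ℝ)^α + 1) * 3^(-α) = (2/3)^α + 3^(-α) := by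
    rw [add_mul, one_mul, k1]
  rw [expand]
  linarith

/-- Let `α ∈ (1,2)`, `β = α-1`, `B(a) = ∫_{-a-1}^{-a} (|1+z|^β - 1)/|z|^{1+α} dz`
and `G = P.V. ∫_{-1}^{1} (|1+z|^β + |1-z|^β - 2)/|z|^{1+α} dz`. Then `B(2) < -G/2`. -/
theorem B_two_lt_neg_half_G (α β G : ℝ) (hα1 : 1 < α) (hα2 : α < 2) (hβ : β = α - 1)
    (hG : Tendsto (fun b : ℝ =>
        ∫ z in {z : ℝ | b < |z| ∧ |z| < 1},
          (|1 + z| ^ β + |1 - z| ^ β - 2) / |z| ^ (1 + α))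
      (𝓝[>] (0 : ℝ)) (𝓝 G)) :
    (∫ z in (-(2 : ℝ) - 1)..(-2 : ℝ), (|1 + z| ^ β - 1) / |z| ^ (1 + α)) < -G / 2 := by
  have hβ0 : 0 < β := by linarith
  have hα0 : (0:ℝ) < α := by linarith
  have hαne : α ≠ 0 := hα0.ne'
  -- Step 1: value of the B integral
  have hBval : (∫ z in (-(2 : ℝ) - 1)..(-2 : ℝ), (|1 + z| ^ β - 1) / |z| ^ (1 + α))
      = (1/α) * (((2:ℝ)^α + 1) * 3^(-α) - 2 * 2^(-α)) := by
    rw [show (-(2:ℝ) - 1) = (-3:ℝ) by norm_num]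
    have hftc := intervalIntegral.integral_eq_sub_of_hasDerivAt
      (f := fun z : ℝ => -(1/α) * (((-1 - z) ^ α + 1) * (-z) ^ (-α)))
      (f' := fun z : ℝ => (|1 + z| ^ β - 1) / |z| ^ (1 + α))
      (a := (-3:ℝ)) (b := (-2:ℝ))
      (fun x hx => by
        rw [uIcc_of_le (by norm_num : (-3:ℝ) ≤ -2)] at hx
        exact hasDeriv_K hα1 hβ (by linarith [hx.2] : x < -1))
      ((contOn_g hβ0 (fun x hx => by
          rw [uIcc_of_le (by norm_num : (-3:ℝ) ≤ -2)] at hx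
          have : x ≤ -2 := hx.2
          intro h; rw [h] at this; norm_num at this)).intervalIntegrable)
    rw [hftc]
    norm_num [Real.one_rpow]
    ring
  -- Step 2: value of G
  set C : ℝ := -(2/α) * (2^α - 2) with hC
  have hTeq : ∀ b ∈ Ioo (0:ℝ) 1,
      (∫ z in {z : ℝ | b < |z| ∧ |z| < 1},
          (|1 + z| ^ β + |1 - z| ^ β - 2) / |z| ^ (1 + α))
      = C + (2/α) * (b^(-α) * ((1+b)^α + (1-b)^α - 2)) := by
    rintro b ⟨hb0, hb1⟩
    have hsplit : {z : ℝ | b < |z| ∧ |z| < 1} = Ioo (-1:ℝ) (-b) ∪ Ioo b 1 := by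
      ext z
      simp only [mem_setOf_eq, mem_union, mem_Ioo, abs_lt, lt_abs]
      constructor
      · rintro ⟨h1, h2, h3⟩
        rcases h1 with h | h
        · right; exact ⟨h, h3⟩
        · left; exact ⟨h2, by linarith⟩
      · rintro (⟨h1, h2⟩ | ⟨h1, h2⟩)
        · exact ⟨Or.inr (by linarith), h1, by linarith⟩
        · exact ⟨Or.inl h1, by constructor <;> linarith⟩
    have hdisj : Disjoint (Ioo (-1:ℝ) (-b)) (Ioo b 1) := by
      rw [Set.disjoint_left]
      rintro x ⟨_, h2⟩ ⟨h3, _⟩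
      linarith
    have hint1 : IntegrableOn
        (fun z : ℝ => (|1 + z| ^ β + |1 - z| ^ β - 2) / |z| ^ (1 + α))
        (Ioo (-1:ℝ) (-b)) := by
      refine ((contOn_f hβ0 (s := Icc (-1:ℝ) (-b)) ?_).integrableOn_Icc).mono_set
        Ioo_subset_Icc_self
      rintro x ⟨_, h2⟩ rfl
      simp at h2; linarith
    have hint2 : IntegrableOn
        (fun z : ℝ => (|1 + z| ^ β + |1 - z| ^ β - 2) / |z| ^ (1 + α))
        (Ioo b 1) := by
      refine ((contOn_f hβ0 (s := Icc b 1) ?_).integrableOn_Icc).mono_set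
        Ioo_subset_Icc_self
      rintro x ⟨h1, _⟩ rfl
      linarith
    rw [hsplit, setIntegral_union hdisj measurableSet_Ioo hint1 hint2]
    have i1 : (∫ z in Ioo (-1:ℝ) (-b),
        (|1 + z| ^ β + |1 - z| ^ β - 2) / |z| ^ (1 + α))
        = ∫ z in (-1:ℝ)..(-b), (|1 + z| ^ β + |1 - z| ^ β - 2) / |z| ^ (1 + α) := by
      rw [intervalIntegral.integral_of_le (by linarith : (-1:ℝ) ≤ -b),
        integral_Ioc_eq_integral_Ioo]
    have i2 : (∫ z in Ioo b 1,
        (|1 + z| ^ β + |1 - z| ^ β - 2) / |z| ^ (1 + α))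
        = ∫ z in b..(1:ℝ), (|1 + z| ^ β + |1 - z| ^ β - 2) / |z| ^ (1 + α) := by
      rw [intervalIntegral.integral_of_le (by linarith : b ≤ (1:ℝ)),
        integral_Ioc_eq_integral_Ioo]
    have F1 := intervalIntegral.integral_eq_sub_of_hasDerivAt
      (f := fun z : ℝ => (1/α) * ((-z) ^ (-α) * ((1 + z) ^ α + (1 - z) ^ α - 2)))
      (f' := fun z : ℝ => (|1 + z| ^ β + |1 - z| ^ β - 2) / |z| ^ (1 + α))
      (a := (-1:ℝ)) (b := (-b:ℝ))
      (fun x hx => by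
        rw [uIcc_of_le (by linarith : (-1:ℝ) ≤ -b)] at hx
        exact hasDeriv_Psi hα1 hβ hx.1 (by linarith [hx.2] : x < 0))
      ((contOn_f hβ0 (fun x hx => by
          rw [uIcc_of_le (by linarith : (-1:ℝ) ≤ -b)] at hx
          have := hx.2; intro h; rw [h] at this; linarith)).intervalIntegrable)
    have F2 := intervalIntegral.integral_eq_sub_of_hasDerivAt
      (f := fun z : ℝ => -(1/α) * (z ^ (-α) * ((1 + z) ^ α + (1 - z) ^ α - 2)))
      (f' := fun z : ℝ => (|1 + z| ^ β + |1 - z| ^ β - 2) / |z| ^ (1 + α))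
      (a := b) (b := (1:ℝ))
      (fun x hx => by
        rw [uIcc_of_le (by linarith : b ≤ (1:ℝ))] at hx
        exact hasDeriv_Phi hα1 hβ (by linarith [hx.1] : 0 < x) hx.2)
      ((contOn_f hβ0 (fun x hx => by
          rw [uIcc_of_le (by linarith : b ≤ (1:ℝ))] at hx
          have := hx.1; intro h; rw [h] at this; linarith)).intervalIntegrable)
    rw [i1, i2, F1, F2, hC]
    have h0 : ((0:ℝ))^α = 0 := Real.zero_rpow hαne
    norm_num [Real.one_rpow, h0]
    ring
  -- Step 3: the limit
  have hr : Tendsto (fun b : ℝ => b^(-α) * ((1+b)^α + (1-b)^α - 2)) (𝓝[>] (0:ℝ)) (𝓝 0) := by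
    have hmem : Ioo (0:ℝ) 1 ∈ 𝓝[>] (0:ℝ) :=
      Ioo_mem_nhdsGT_of_mem (by norm_num : (0:ℝ) ∈ Ico (0:ℝ) 1)
    have hlow : ∀ᶠ b in 𝓝[>] (0:ℝ), (0:ℝ) ≤ b^(-α) * ((1+b)^α + (1-b)^α - 2) := by
      filter_upwards [hmem] with b hb
      exact mul_nonneg (Real.rpow_nonneg hb.1.le _) (g_bounds hα1 hα2 hb.1 hb.2).1
    have hup : ∀ᶠ b in 𝓝[>] (0:ℝ),
        b^(-α) * ((1+b)^α + (1-b)^α - 2) ≤ 2 * b^(2-α) := by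
      filter_upwards [hmem] with b hb
      have h1 : b^(-α) * ((1+b)^α + (1-b)^α - 2) ≤ b^(-α) * (2*b^2) :=
        mul_le_mul_of_nonneg_left (g_bounds hα1 hα2 hb.1 hb.2).2
          (Real.rpow_nonneg hb.1.le _)
      have h2 : b^(-α) * (2*b^2) = 2 * b^(2-α) := by
        rw [show (2-α:ℝ) = -α + 2 by ring, Real.rpow_add hb.1,
          show ((2:ℝ)) = ((2:ℕ):ℝ) by norm_num, Real.rpow_natCast]
        ring
      linarith
    have htop : Tendsto (fun b : ℝ => 2 * b^(2-α)) (𝓝[>] (0:ℝ)) (𝓝 0) := by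
      have hc := (Real.continuousAt_rpow_const 0 (2-α) (Or.inr (by linarith))).tendsto
      rw [Real.zero_rpow (by linarith : (0:ℝ) < 2-α).ne'] at hc
      simpa using (hc.mono_left nhdsWithin_le_nhds).const_mul 2
    exact tendsto_of_tendsto_of_tendsto_of_le_of_le' tendsto_const_nhds htop hlow hup
  have hT : Tendsto (fun b : ℝ =>
      ∫ z in {z : ℝ | b < |z| ∧ |z| < 1},
        (|1 + z| ^ β + |1 - z| ^ β - 2) / |z| ^ (1 + α)) (𝓝[>] (0:ℝ)) (𝓝 C) := by
    have hE : Tendsto (fun b : ℝ =>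
        C + (2/α) * (b^(-α) * ((1+b)^α + (1-b)^α - 2))) (𝓝[>] (0:ℝ)) (𝓝 C) := by
      simpa using (hr.const_mul (2/α)).const_add C
    refine hE.congr' ?_
    filter_upwards [Ioo_mem_nhdsGT_of_mem (by norm_num : (0:ℝ) ∈ Ico (0:ℝ) 1)] with b hb
    exact (hTeq b hb).symm
  have hGval : G = C := tendsto_nhds_unique hG hT
  -- Step 4: conclude
  rw [hBval, hGval, hC]
  have h := mul_lt_mul_of_pos_left (key_ineq hα1 hα2) (show (0:ℝ) < 1/α by positivity)
  have heq : -(-(2/α) * ((2:ℝ)^α - 2))/2 = (1/α) * ((2:ℝ)^α - 2) := by ring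
  rw [heq]
  exact h
end

section
/- Let α ∈ (1,2), β = α - 1, and define B(a), G as in the previous context. Then there exists κ > 0 such that B(a) + G ≤ -κ < 0 for every a > 1. -/
open MeasureTheory Filter Topology

section Aux

open Set intervalIntegral

/-- `p(z) = (1-(1-z)^β)/z^(1+α)`, the negative of the `ψ₋` part of the integrand of `G`. -/
noncomputable def pfun (α β z : ℝ) : ℝ := (1 - (1 - z) ^ β) / z ^ (1 + α)

/-- `q(w) = ((w-1)^β-1)/w^(1+α)`, the integrand of `B(a)` after reflection. -/
noncomputable def qfun (α β w : ℝ) : ℝ := ((w - 1) ^ β - 1) / w ^ (1 + α)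

/-- `ψ₊(z) = ((1+z)^β-1)/z^(1+α)`. -/
noncomputable def psip (α β z : ℝ) : ℝ := ((1 + z) ^ β - 1) / z ^ (1 + α)

/-- the substitution `ζ(w) = 1 - 1/(2(w-1))`. -/
noncomputable def zeta (w : ℝ) : ℝ := 1 - 1 / (2 * (w - 1))

/-- the integrand of `G`. -/
noncomputable def phiG (α β z : ℝ) : ℝ := (|1 + z| ^ β + |1 - z| ^ β - 2) / |z| ^ (1 + α)

lemma rpow_cont {β : ℝ} (hβ : 0 ≤ β) : Continuous fun u : ℝ => u ^ β := by
  rw [continuous_iff_continuousAt]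
  intro x
  exact Real.continuousAt_rpow_const x β (Or.inr hβ)

lemma pfun_contOn {α β : ℝ} (hβ : 0 ≤ β) : ContinuousOn (pfun α β) (Ioi 0) := by
  unfold pfun
  apply ContinuousOn.div
  · exact (continuous_const.sub ((rpow_cont hβ).comp (continuous_const.sub continuous_id))).continuousOn
  · intro z hz
    exact (Real.continuousAt_rpow_const z (1+α) (Or.inl (ne_of_gt hz))).continuousWithinAt
  · intro z hz
    exact ne_of_gt (Real.rpow_pos_of_pos hz _)

lemma psip_contOn {α β : ℝ} (hβ : 0 ≤ β) : ContinuousOn (psip α β) (Ioi 0) := by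
  unfold psip
  apply ContinuousOn.div
  · exact ((rpow_cont hβ).comp (continuous_const.add continuous_id)).sub continuous_const |>.continuousOn
  · intro z hz
    exact (Real.continuousAt_rpow_const z (1+α) (Or.inl (ne_of_gt hz))).continuousWithinAt
  · intro z hz
    exact ne_of_gt (Real.rpow_pos_of_pos hz _)

lemma qfun_contOn {α β : ℝ} (hβ : 0 ≤ β) : ContinuousOn (qfun α β) (Ioi 0) := by
  unfold qfun
  apply ContinuousOn.div
  · exact ((rpow_cont hβ).comp (continuous_id.sub continuous_const)).sub continuous_const |>.continuousOn
  · intro z hz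
    exact (Real.continuousAt_rpow_const z (1+α) (Or.inl (ne_of_gt hz))).continuousWithinAt
  · intro z hz
    exact ne_of_gt (Real.rpow_pos_of_pos hz _)

lemma pfun_pos {α β z : ℝ} (hβ : 0 < β) (h0 : 0 < z) (h1 : z ≤ 1) : 0 < pfun α β z := by
  unfold pfun
  apply div_pos
  · rcases eq_or_lt_of_le h1 with h | h
    · subst h; simp [Real.zero_rpow (ne_of_gt hβ)]
    · have h2 : (1 - z) ^ β < 1 := by
        apply Real.rpow_lt_one (by linarith) (by linarith) hβ
      linarith
  · exact Real.rpow_pos_of_pos h0 _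

lemma pfun_nonneg {α β z : ℝ} (hβ : 0 < β) (h0 : 0 < z) (h1 : z ≤ 1) : 0 ≤ pfun α β z :=
  (pfun_pos hβ h0 h1).le

lemma uIcc_pos {u v : ℝ} (hu : 0 < u) (hv : 0 < v) : uIcc u v ⊆ Ioi 0 := fun x hx =>
  lt_of_lt_of_le (lt_min hu hv) hx.1

lemma pfun_ii {α β : ℝ} (hβ0 : 0 ≤ β) {u v : ℝ} (hu : 0 < u) (hv : 0 < v) :
    IntervalIntegrable (pfun α β) volume u v :=
  ((pfun_contOn hβ0).mono (uIcc_pos hu hv)).intervalIntegrable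

lemma psip_ii {α β : ℝ} (hβ0 : 0 ≤ β) {u v : ℝ} (hu : 0 < u) (hv : 0 < v) :
    IntervalIntegrable (psip α β) volume u v :=
  ((psip_contOn hβ0).mono (uIcc_pos hu hv)).intervalIntegrable

lemma qfun_ii {α β : ℝ} (hβ0 : 0 ≤ β) {u v : ℝ} (hu : 0 < u) (hv : 0 < v) :
    IntervalIntegrable (qfun α β) volume u v :=
  ((qfun_contOn hβ0).mono (uIcc_pos hu hv)).intervalIntegrable

/-- The key pointwise inequality `q(w) ≤ 2 ζ'(w) p(ζ(w))` for `w ≥ 2`. -/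
lemma key_ineq_s5 {α β : ℝ} (hα1 : 1 < α) (hα2 : α < 2) (hβ : β = α - 1) {w : ℝ} (hw : 2 ≤ w) :
    qfun α β w ≤ 2 * ((1 / (2 * (w - 1) ^ 2)) * pfun α β (zeta w)) := by
  have hβ0 : 0 ≤ β := by rw [hβ]; linarith
  have ht1 : (1:ℝ) ≤ w - 1 := by linarith
  have ht0 : (0:ℝ) < w - 1 := by linarith
  have h2t : (0:ℝ) < 2 * (w - 1) := by linarith
  have h2t1 : (0:ℝ) < 2 * (w - 1) - 1 := by linarith
  have hw0 : (0:ℝ) < w := by linarith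
  have hexp : 1 + α = β + 2 := by rw [hβ]; ring
  have hz : zeta w = (2 * (w - 1) - 1) / (2 * (w - 1)) := by
    unfold zeta; field_simp
  have e1 : 1 - (2 * (w - 1) - 1) / (2 * (w - 1)) = 1 / (2 * (w - 1)) := by
    field_simp
    ring
  have e2 : (1 / (2 * (w - 1))) ^ β = 1 / (2 * (w - 1)) ^ β := by
    rw [Real.div_rpow zero_le_one h2t.le, Real.one_rpow]
  have e3 : ((2 * (w - 1) - 1) / (2 * (w - 1))) ^ (1 + α)
      = (2 * (w - 1) - 1) ^ (1 + α) / (2 * (w - 1)) ^ (1 + α) :=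
    Real.div_rpow h2t1.le h2t.le _
  have e4 : (2 * (w - 1)) ^ (1 + α) = (2 * (w - 1)) ^ β * (2 * (w - 1)) ^ (2:ℕ) := by
    rw [hexp, Real.rpow_add h2t, Real.rpow_two]
  have hR : 2 * ((1 / (2 * (w - 1) ^ 2)) * pfun α β (zeta w))
      = 4 * ((2 * (w - 1)) ^ β - 1) / (2 * (w - 1) - 1) ^ (1 + α) := by
    rw [hz]; unfold pfun
    rw [e1, e2, e3, e4]
    have hA : (0:ℝ) < (2 * (w - 1)) ^ β := Real.rpow_pos_of_pos h2t _
    have hD : (0:ℝ) < (2 * (w - 1) - 1) ^ (1 + α) := Real.rpow_pos_of_pos h2t1 _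
    field_simp
    ring
  rw [hR]
  unfold qfun
  have hW : (0:ℝ) < w ^ (1 + α) := Real.rpow_pos_of_pos hw0 _
  have hD : (0:ℝ) < (2 * (w - 1) - 1) ^ (1 + α) := Real.rpow_pos_of_pos h2t1 _
  rw [div_le_div_iff₀ hW hD]
  have k1 : (2 * (w - 1) - 1) ^ (1 + α) ≤ 2 ^ (1 + α) * w ^ (1 + α) := by
    rw [← Real.mul_rpow (by norm_num) hw0.le]
    exact Real.rpow_le_rpow (by linarith) (by linarith) (by linarith)
  have k2 : (2:ℝ) ^ (1 + α) = 4 * 2 ^ β := by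
    rw [hexp, Real.rpow_add two_pos, Real.rpow_two]; ring
  have k3 : (2:ℝ) ^ β * (w - 1) ^ β = (2 * (w - 1)) ^ β :=
    (Real.mul_rpow (by norm_num) ht0.le).symm
  have k4 : (1:ℝ) ≤ (2:ℝ) ^ β := Real.one_le_rpow one_le_two hβ0
  have k5 : (0:ℝ) ≤ (w - 1) ^ β - 1 := by
    have := Real.one_le_rpow ht1 hβ0
    linarith
  have k6 : ((w - 1) ^ β - 1) * (2 * (w - 1) - 1) ^ (1 + α)
      ≤ ((w - 1) ^ β - 1) * (4 * 2 ^ β * w ^ (1 + α)) := by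
    apply mul_le_mul_of_nonneg_left _ k5
    rw [← k2]; exact k1
  have k7 : ((w - 1) ^ β - 1) * (4 * 2 ^ β * w ^ (1 + α))
      = 4 * ((2 * (w - 1)) ^ β - 2 ^ β) * w ^ (1 + α) := by
    rw [← k3]; ring
  have k8 : 4 * ((2 * (w - 1)) ^ β - 2 ^ β) * w ^ (1 + α)
      ≤ 4 * ((2 * (w - 1)) ^ β - 1) * w ^ (1 + α) := by
    apply mul_le_mul_of_nonneg_right _ hW.le
    linarith
  linarith

lemma zeta_deriv {w : ℝ} (hw : w ≠ 1) :
    HasDerivAt zeta (1 / (2 * (w - 1) ^ 2)) w := by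
  have h1 : HasDerivAt (fun w : ℝ => 2 * (w - 1)) 2 w := by
    simpa using ((hasDerivAt_id w).sub_const 1).const_mul 2
  have h2 : (2 : ℝ) * (w - 1) ≠ 0 := by
    intro h
    apply hw
    rcases mul_eq_zero.mp h with h' | h'
    · norm_num at h'
    · linarith
  have h3 : HasDerivAt (fun w : ℝ => 1 / (2 * (w - 1))) (-2 / (2 * (w - 1)) ^ 2) w := by
    rw [show (fun w : ℝ => 1 / (2 * (w - 1))) = (fun w : ℝ => 2 * (w - 1))⁻¹ from by
      ext x; simp only [Pi.inv_apply, one_div]]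
    exact h1.inv h2
  have h4 := h3.const_sub 1
  have h5 : -(-2 / (2 * (w - 1)) ^ 2) = 1 / (2 * (w - 1) ^ 2) := by
    have : w - 1 ≠ 0 := fun h => hw (by linarith [sub_eq_zero.mp h])
    field_simp
  rw [h5] at h4
  exact h4.congr_deriv rfl

lemma zeta_mono {u v : ℝ} (hu : 2 ≤ u) (huv : u ≤ v) : zeta u ≤ zeta v := by
  unfold zeta
  have : 1 / (2 * (v - 1)) ≤ 1 / (2 * (u - 1)) :=
    one_div_le_one_div_of_le (by linarith) (by linarith)
  linarith

lemma zeta_lt_one {w : ℝ} (hw : 2 ≤ w) : zeta w ≤ 1 := by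
  unfold zeta
  have h1 : (0:ℝ) < w - 1 := by linarith
  have : 0 < 1 / (2 * (w - 1)) := by positivity
  linarith

lemma zeta_half {w : ℝ} (hw : 2 ≤ w) : 1/2 ≤ zeta w := by
  unfold zeta
  have : 1 / (2 * (w - 1)) ≤ 1/2 := by
    apply one_div_le_one_div_of_le <;> linarith
  linarith

lemma comp_contOn {α β : ℝ} (hβ0 : 0 ≤ β) :
    ContinuousOn (fun w => pfun α β (zeta w) * (1 / (2 * (w - 1) ^ 2))) (Ici 2) := by
  apply ContinuousOn.mul
  · apply (pfun_contOn hβ0).comp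
    · apply ContinuousOn.sub continuousOn_const
      apply ContinuousOn.div continuousOn_const
      · fun_prop
      · intro x hx
        have : (2:ℝ) ≤ x := hx
        have h1 : (0:ℝ) < x - 1 := by linarith
        positivity
    · intro w hw
      have h := zeta_half (w := w) hw
      have : (0:ℝ) < zeta w := by linarith
      exact this
  · apply ContinuousOn.div continuousOn_const
    · fun_prop
    · intro x hx
      have : (2:ℝ) ≤ x := hx
      have h1 : (0:ℝ) < x - 1 := by linarith
      positivity

/-- Change of variables `z = ζ(w)` for the `B`-part. -/
lemma cov_zeta {α β : ℝ} (hβ0 : 0 ≤ β) {c d : ℝ} (hc : 2 ≤ c) (hcd : c ≤ d) :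
    ∫ w in c..d, pfun α β (zeta w) * (1 / (2 * (w - 1) ^ 2))
      = ∫ z in zeta c..zeta d, pfun α β z := by
  have him : zeta '' (uIcc c d) ⊆ Ioi 0 := by
    rintro _ ⟨w, hwm, rfl⟩
    rw [uIcc_of_le hcd] at hwm
    have hw2 : 2 ≤ w := le_trans hc hwm.1
    have : 1 / (2 * (w - 1)) ≤ 1 / 2 :=
      one_div_le_one_div_of_le (by norm_num) (by linarith)
    have : (0:ℝ) < zeta w := by unfold zeta; linarith
    exact this
  refine integral_comp_mul_deriv' (fun x hx => ?_) ?_ ((pfun_contOn hβ0).mono him)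
  · rw [uIcc_of_le hcd] at hx
    exact zeta_deriv (by intro h; rw [h] at hx; linarith [hx.1])
  · rw [uIcc_of_le hcd]
    apply ContinuousOn.div continuousOn_const
    · fun_prop
    · intro x hx
      have h1 : (1:ℝ) ≤ x - 1 := by linarith [le_trans hc hx.1]
      positivity

lemma psip_eq_pfun_eta {α β : ℝ} (hα1 : 1 < α) (hβ : β = α - 1) {z : ℝ} (hz : 0 < z) :
    pfun α β (z / (1 + z)) * (1 / (1 + z) ^ 2) = psip α β z := by
  have h1z : (0:ℝ) < 1 + z := by linarith
  have hexp : 1 + α = β + 2 := by rw [hβ]; ring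
  have e1 : 1 - z / (1 + z) = 1 / (1 + z) := by field_simp; ring
  have e2 : (1 / (1 + z)) ^ β = 1 / (1 + z) ^ β := by
    rw [Real.div_rpow zero_le_one h1z.le, Real.one_rpow]
  have e3 : (z / (1 + z)) ^ (1 + α) = z ^ (1 + α) / (1 + z) ^ (1 + α) :=
    Real.div_rpow hz.le h1z.le _
  have e4 : (1 + z) ^ (1 + α) = (1 + z) ^ β * (1 + z) ^ (2:ℕ) := by
    rw [hexp, Real.rpow_add h1z, Real.rpow_two]
  have hA : (0:ℝ) < (1 + z) ^ β := Real.rpow_pos_of_pos h1z _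
  have hZ : (0:ℝ) < z ^ (1 + α) := Real.rpow_pos_of_pos hz _
  unfold pfun psip
  rw [e1, e2, e3, e4]
  field_simp

/-- Change of variables `u = z/(1+z)` relating `ψ₊` and `p`. -/
lemma cov_eta {α β : ℝ} (hα1 : 1 < α) (hβ : β = α - 1) {b : ℝ} (hb0 : 0 < b) (hb1 : b ≤ 1) :
    ∫ z in b..1, psip α β z = ∫ u in (b / (1 + b))..(1/2), pfun α β u := by
  have hβ0 : 0 ≤ β := by rw [hβ]; linarith
  have key : ∀ x ∈ uIcc b 1, HasDerivAt (fun z : ℝ => z / (1 + z)) (1 / (1 + x) ^ 2) x := by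
    intro x hx
    rw [uIcc_of_le hb1] at hx
    have hx0 : (0:ℝ) < x := lt_of_lt_of_le hb0 hx.1
    have h1x : (1:ℝ) + x ≠ 0 := by linarith
    have := (hasDerivAt_id x).div ((hasDerivAt_id x).const_add 1) h1x
    rw [show (1:ℝ) / (1 + x) ^ 2 = (1 * (1 + x) - x * 1) / (1 + x) ^ 2 by ring]
    exact this
  have him : (fun z : ℝ => z / (1 + z)) '' (uIcc b 1) ⊆ Ioi 0 := by
    rintro _ ⟨x, hxm, rfl⟩
    rw [uIcc_of_le hb1] at hxm
    have hx0 : (0:ℝ) < x := lt_of_lt_of_le hb0 hxm.1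
    exact div_pos hx0 (by linarith)
  have h' : ContinuousOn (fun x : ℝ => 1 / (1 + x) ^ 2) (uIcc b 1) := by
    rw [uIcc_of_le hb1]
    apply ContinuousOn.div continuousOn_const
    · fun_prop
    · intro x hx
      have hx0 : (0:ℝ) < x := lt_of_lt_of_le hb0 hx.1
      positivity
  have cov := integral_comp_mul_deriv' (g := pfun α β) key h'
    ((pfun_contOn (α := α) hβ0).mono him)
  have congr1 : ∫ z in b..1, ((pfun α β) ∘ (fun z : ℝ => z / (1 + z))) z * (1 / (1 + z) ^ 2)
      = ∫ z in b..1, psip α β z := by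
    apply integral_congr
    intro x hx
    rw [uIcc_of_le hb1] at hx
    exact psip_eq_pfun_eta hα1 hβ (lt_of_lt_of_le hb0 hx.1)
  rw [← congr1, cov]
  norm_num

/-- Uniform bound on `B(a)`. -/
lemma B_bound {α β : ℝ} (hα1 : 1 < α) (hα2 : α < 2) (hβ : β = α - 1) {a : ℝ} (ha : 1 < a) :
    (∫ z in (-a - 1)..(-a), (|1 + z| ^ β - 1) / |z| ^ (1 + α))
      ≤ 2 * (∫ z in (1/2 : ℝ)..1, pfun α β z)
        - 2 * min (∫ z in (1/2 : ℝ)..(3/4), pfun α β z) (∫ z in (5/6 : ℝ)..1, pfun α β z) := by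
  have hβ0 : 0 ≤ β := by rw [hβ]; linarith
  have hβpos : 0 < β := by rw [hβ]; linarith
  -- Step 1: reflection
  have refl1 : (∫ z in (-a - 1)..(-a), (|1 + z| ^ β - 1) / |z| ^ (1 + α))
      = ∫ w in a..(a + 1), qfun α β w := by
    have h1 : (∫ x in a..(a+1), (|1 + (-x)| ^ β - 1) / |(-x)| ^ (1 + α))
        = ∫ x in (-(a+1))..(-a), (|1 + x| ^ β - 1) / |x| ^ (1 + α) :=
      integral_comp_neg (fun x => (|1 + x| ^ β - 1) / |x| ^ (1 + α))
    have h2 : -a - 1 = -(a+1) := by ring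
    rw [h2, ← h1]
    apply integral_congr
    intro x hx
    rw [uIcc_of_le (by linarith : a ≤ a + 1)] at hx
    have hx1 : 1 < x := lt_of_lt_of_le ha hx.1
    unfold qfun
    show (|1 + -x| ^ β - 1) / |(-x)| ^ (1 + α) = ((x - 1) ^ β - 1) / x ^ (1 + α)
    rw [show (1 : ℝ) + (-x) = -(x - 1) by ring, abs_neg, abs_neg,
      abs_of_nonneg (by linarith : (0:ℝ) ≤ x - 1), abs_of_nonneg (by linarith : (0:ℝ) ≤ x)]
  rw [refl1]
  set c := max a 2 with hc
  have hac : a ≤ c := le_max_left _ _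
  have h2c : 2 ≤ c := le_max_right _ _
  have hca1 : c ≤ a + 1 := max_le (by linarith) (by linarith)
  have ha0 : (0:ℝ) < a := by linarith
  have hc0 : (0:ℝ) < c := by linarith
  have ha10 : (0:ℝ) < a + 1 := by linarith
  -- Step 2: split and drop the negative part
  have hsplit : (∫ w in a..c, qfun α β w) + (∫ w in c..(a+1), qfun α β w)
      = ∫ w in a..(a+1), qfun α β w :=
    integral_add_adjacent_intervals (qfun_ii hβ0 ha0 hc0) (qfun_ii hβ0 hc0 ha10)
  have hneg : (∫ w in a..c, qfun α β w) ≤ 0 := by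
    rcases le_total 2 a with h | h
    · have hca : c = a := max_eq_left h
      rw [hca, integral_same]
    · have hc2 : c = 2 := max_eq_right h
      have : (∫ w in a..c, qfun α β w) ≤ ∫ w in a..c, (0:ℝ) := by
        apply integral_mono_on hac (qfun_ii hβ0 ha0 hc0) intervalIntegrable_const
        intro x hx
        have hx1 : 1 < x := lt_of_lt_of_le ha hx.1
        have hx2 : x ≤ 2 := by rw [hc2] at hx; exact hx.2
        unfold qfun
        apply div_nonpos_of_nonpos_of_nonneg
        · have : (x - 1) ^ β ≤ 1 := Real.rpow_le_one (by linarith) (by linarith) hβ0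
          linarith
        · positivity
      simpa using this
  -- Step 3: pointwise bound on [c, a+1]
  have hsub : uIcc c (a+1) ⊆ Ici 2 := fun x hx => le_trans (le_min h2c (by linarith)) hx.1
  have hii2 : IntervalIntegrable (fun w => pfun α β (zeta w) * (1 / (2 * (w - 1) ^ 2)))
      volume c (a+1) := ((comp_contOn hβ0).mono hsub).intervalIntegrable
  have hmono : (∫ w in c..(a+1), qfun α β w)
      ≤ ∫ w in c..(a+1), 2 * (pfun α β (zeta w) * (1 / (2 * (w - 1) ^ 2))) := by
    apply integral_mono_on hca1 (qfun_ii hβ0 hc0 ha10) (hii2.const_mul 2)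
    intro x hx
    have h2x : 2 ≤ x := le_trans h2c hx.1
    rw [mul_comm (pfun α β (zeta x)) (1 / (2 * (x - 1) ^ 2))]
    exact key_ineq_s5 hα1 hα2 hβ h2x
  -- Step 4: change of variables
  have hcov : (∫ w in c..(a+1), 2 * (pfun α β (zeta w) * (1 / (2 * (w - 1) ^ 2))))
      = 2 * ∫ z in zeta c..zeta (a+1), pfun α β z := by
    rw [intervalIntegral.integral_const_mul, cov_zeta hβ0 h2c hca1]
  -- Step 5: window bound
  have hz0 : (0:ℝ) < zeta c := lt_of_lt_of_le (by norm_num) (zeta_half h2c)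
  have hz1 : zeta (a+1) ≤ 1 := zeta_lt_one (by linarith)
  have hzm : zeta c ≤ zeta (a+1) := zeta_mono h2c hca1
  have hwin : (∫ z in zeta c..zeta (a+1), pfun α β z)
      ≤ (∫ z in (1/2:ℝ)..1, pfun α β z)
        - min (∫ z in (1/2 : ℝ)..(3/4), pfun α β z) (∫ z in (5/6 : ℝ)..1, pfun α β z) := by
    rcases le_total 3 a with h3 | h3
    · -- window inside [3/4, 1]
      have hca' : c = a := max_eq_left (by linarith)
      have hz34 : 3/4 ≤ zeta c := by
        rw [hca']
        unfold zeta
        have : 1 / (2 * (a - 1)) ≤ 1/4 := one_div_le_one_div_of_le (by norm_num) (by linarith)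
        linarith
      have step1 : (∫ z in zeta c..zeta (a+1), pfun α β z) ≤ ∫ z in (3/4:ℝ)..1, pfun α β z :=
        integral_mono_interval hz34 hzm hz1
          (by
            filter_upwards [ae_restrict_mem measurableSet_Ioc] with x hx
            exact pfun_nonneg hβpos (by linarith [hx.1]) hx.2)
          (pfun_ii hβ0 (by norm_num) one_pos)
      have split : (∫ z in (1/2:ℝ)..(3/4), pfun α β z) + (∫ z in (3/4:ℝ)..1, pfun α β z)
          = ∫ z in (1/2:ℝ)..1, pfun α β z :=
        integral_add_adjacent_intervals (pfun_ii hβ0 (by norm_num) (by norm_num))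
          (pfun_ii hβ0 (by norm_num) one_pos)
      have : min (∫ z in (1/2 : ℝ)..(3/4), pfun α β z) (∫ z in (5/6 : ℝ)..1, pfun α β z)
          ≤ ∫ z in (1/2 : ℝ)..(3/4), pfun α β z := min_le_left _ _
      linarith
    · -- window inside [1/2, 5/6]
      have hz56 : zeta (a+1) ≤ 5/6 := by
        unfold zeta
        have h6 : 1/6 ≤ 1 / (2 * (a + 1 - 1)) := by
          apply one_div_le_one_div_of_le
          · linarith
          · linarith
        linarith
      have step1 : (∫ z in zeta c..zeta (a+1), pfun α β z) ≤ ∫ z in (1/2:ℝ)..(5/6), pfun α β z :=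
        integral_mono_interval (zeta_half h2c) hzm hz56
          (by
            filter_upwards [ae_restrict_mem measurableSet_Ioc] with x hx
            exact pfun_nonneg hβpos (by linarith [hx.1]) (by linarith [hx.2]))
          (pfun_ii hβ0 (by norm_num) (by norm_num))
      have split : (∫ z in (1/2:ℝ)..(5/6), pfun α β z) + (∫ z in (5/6:ℝ)..1, pfun α β z)
          = ∫ z in (1/2:ℝ)..1, pfun α β z :=
        integral_add_adjacent_intervals (pfun_ii hβ0 (by norm_num) (by norm_num))
          (pfun_ii hβ0 (by norm_num) one_pos)
      have : min (∫ z in (1/2 : ℝ)..(3/4), pfun α β z) (∫ z in (5/6 : ℝ)..1, pfun α β z)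
          ≤ ∫ z in (5/6 : ℝ)..1, pfun α β z := min_le_right _ _
      linarith
  linarith

lemma phiG_nonpos {α β : ℝ} (hβpos : 0 < β) (hβ1 : β ≤ 1) {z : ℝ} (hz : |z| ≤ 1) :
    phiG α β z ≤ 0 := by
  have hz1 : -1 ≤ z := (abs_le.mp hz).1
  have hz2 : z ≤ 1 := (abs_le.mp hz).2
  have e1 : |1 + z| = 1 + z := abs_of_nonneg (by linarith)
  have e2 : |1 - z| = 1 - z := abs_of_nonneg (by linarith)
  have cc := (Real.concaveOn_rpow hβpos.le hβ1).2 (x := 1 + z) (y := 1 - z)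
    (by simp; linarith) (by simp; linarith)
    (by norm_num : (0:ℝ) ≤ 1/2) (by norm_num : (0:ℝ) ≤ 1/2) (by norm_num)
  have hmid : (1/2 : ℝ) • (1 + z) + (1/2 : ℝ) • (1 - z) = 1 := by
    simp only [smul_eq_mul]; ring
  rw [hmid] at cc
  simp only [smul_eq_mul] at cc
  norm_num [Real.one_rpow] at cc
  unfold phiG
  apply div_nonpos_of_nonpos_of_nonneg
  · rw [e1, e2]; linarith
  · positivity

lemma phiG_integrableOn {α β : ℝ} (hβ0 : 0 ≤ β) {b : ℝ} (hb : 0 < b) :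
    IntegrableOn (phiG α β) {z : ℝ | b < |z| ∧ |z| < 1} volume := by
  have hK : IsCompact {z : ℝ | b ≤ |z| ∧ |z| ≤ 1} := by
    apply IsCompact.of_isClosed_subset (isCompact_Icc (a := (-1:ℝ)) (b := 1))
    · exact IsClosed.inter (isClosed_le continuous_const continuous_abs)
        (isClosed_le continuous_abs continuous_const)
    · intro z hz
      exact abs_le.mp hz.2
  have hcont : ContinuousOn (phiG α β) {z : ℝ | b ≤ |z| ∧ |z| ≤ 1} := by
    unfold phiG
    apply ContinuousOn.div
    · apply ContinuousOn.sub _ continuousOn_const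
      apply ContinuousOn.add
      · exact ((rpow_cont hβ0).comp (continuous_abs.comp (continuous_const.add continuous_id))).continuousOn
      · exact ((rpow_cont hβ0).comp (continuous_abs.comp (continuous_const.sub continuous_id))).continuousOn
    · intro z hz
      have hz0 : z ≠ 0 := by
        intro h; rw [h] at hz; simp at hz; linarith
      exact ((Real.continuousAt_rpow_const |z| (1+α)
        (Or.inl (by simpa using hz0))).comp continuous_abs.continuousAt).continuousWithinAt
    · intro z hz
      have hz0 : 0 < |z| := lt_of_lt_of_le hb hz.1
      exact ne_of_gt (Real.rpow_pos_of_pos hz0 _)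
  exact (hcont.integrableOn_compact hK).mono_set
    (fun z hz => ⟨hz.1.le, hz.2.le⟩)

/-- The truncated integrals of `phiG` are antitone in the truncation parameter. -/
lemma T_mono {α β : ℝ} (hβpos : 0 < β) (hβ1 : β ≤ 1) {b b' : ℝ} (hb' : 0 < b') (h : b' ≤ b) :
    (∫ z in {z : ℝ | b' < |z| ∧ |z| < 1}, phiG α β z)
      ≤ ∫ z in {z : ℝ | b < |z| ∧ |z| < 1}, phiG α β z := by
  have hsub : {z : ℝ | b < |z| ∧ |z| < 1} ⊆ {z : ℝ | b' < |z| ∧ |z| < 1} :=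
    fun z hz => ⟨lt_of_le_of_lt h hz.1, hz.2⟩
  have hint : IntegrableOn (phiG α β) {z : ℝ | b' < |z| ∧ |z| < 1} volume :=
    phiG_integrableOn hβpos.le hb'
  have hopen : MeasurableSet {z : ℝ | b' < |z| ∧ |z| < 1} :=
    ((isOpen_lt continuous_const continuous_abs).inter
      (isOpen_lt continuous_abs continuous_const)).measurableSet
  have key : (∫ z in {z : ℝ | b < |z| ∧ |z| < 1}, -phiG α β z)
      ≤ ∫ z in {z : ℝ | b' < |z| ∧ |z| < 1}, -phiG α β z := by
    apply setIntegral_mono_set hint.neg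
    · filter_upwards [ae_restrict_mem hopen] with z hz
      simp only [Pi.zero_apply, Pi.neg_apply, Left.nonneg_neg_iff]
      exact phiG_nonpos hβpos hβ1 hz.2.le
    · exact hsub.eventuallyLE
  simp only [MeasureTheory.integral_neg] at key
  linarith

/-- Decomposition of the truncated integral of `phiG`. -/
lemma T_decomp {α β : ℝ} (hβ0 : 0 ≤ β) {b : ℝ} (hb0 : 0 < b) (hb1 : b < 1) :
    (∫ z in {z : ℝ | b < |z| ∧ |z| < 1}, phiG α β z)
      = 2 * ((∫ z in b..1, psip α β z) - ∫ z in b..1, pfun α β z) := by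
  have hseteq : {z : ℝ | b < |z| ∧ |z| < 1} = Ioo (-1 : ℝ) (-b) ∪ Ioo b 1 := by
    ext z
    simp only [mem_setOf_eq, mem_union, mem_Ioo]
    constructor
    · rintro ⟨h1, h2⟩
      rcases abs_cases z with ⟨he, hge⟩ | ⟨he, hlt⟩
      · right; constructor <;> linarith [he ▸ h1, he ▸ h2]
      · left; constructor <;> linarith [he ▸ h1, he ▸ h2]
    · rintro (⟨h1, h2⟩ | ⟨h1, h2⟩)
      · rw [abs_of_neg (by linarith)]
        constructor <;> linarith
      · rw [abs_of_pos (by linarith)]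
        constructor <;> linarith
  have hdisj : Disjoint (Ioo (-1 : ℝ) (-b)) (Ioo b 1) := by
    apply Set.disjoint_left.mpr
    rintro z ⟨_, h2⟩ ⟨h3, _⟩
    linarith
  have hi1 : IntegrableOn (phiG α β) (Ioo (-1 : ℝ) (-b)) volume := by
    apply (phiG_integrableOn hβ0 hb0).mono_set
    rintro z ⟨h1, h2⟩
    rw [hseteq]; left; exact ⟨h1, h2⟩
  have hi2 : IntegrableOn (phiG α β) (Ioo b 1) volume := by
    apply (phiG_integrableOn hβ0 hb0).mono_set
    rintro z ⟨h1, h2⟩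
    rw [hseteq]; right; exact ⟨h1, h2⟩
  rw [hseteq, setIntegral_union hdisj measurableSet_Ioo hi1 hi2]
  have hrefl : (∫ z in Ioo (-1 : ℝ) (-b), phiG α β z) = ∫ z in Ioo b 1, phiG α β z := by
    have h1 : (∫ z in Ioo (-1 : ℝ) (-b), phiG α β z) = ∫ z in (-1 : ℝ)..(-b), phiG α β z := by
      rw [integral_of_le (by linarith), integral_Ioc_eq_integral_Ioo]
    have h2 : (∫ z in Ioo b 1, phiG α β z) = ∫ z in b..1, phiG α β z := by
      rw [integral_of_le (by linarith), integral_Ioc_eq_integral_Ioo]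
    have h3 : (∫ x in b..1, phiG α β (-x)) = ∫ x in (-1 : ℝ)..(-b), phiG α β x :=
      integral_comp_neg (phiG α β)
    have h4 : ∀ x : ℝ, phiG α β (-x) = phiG α β x := by
      intro x
      unfold phiG
      rw [abs_neg, show (1:ℝ) + -x = 1 - x by ring, show (1:ℝ) - -x = 1 + x by ring]
      ring
    simp only [h4] at h3
    rw [h1, h2, ← h3]
  rw [hrefl]
  have h2 : (∫ z in Ioo b 1, phiG α β z) = ∫ z in b..1, phiG α β z := by
    rw [integral_of_le (by linarith), integral_Ioc_eq_integral_Ioo]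
  rw [h2]
  have hcongr : (∫ z in b..1, phiG α β z) = ∫ z in b..1, (psip α β z - pfun α β z) := by
    apply integral_congr
    intro x hx
    rw [uIcc_of_le (by linarith : b ≤ 1)] at hx
    have hx0 : 0 < x := lt_of_lt_of_le hb0 hx.1
    have hx1 : x ≤ 1 := hx.2
    unfold phiG psip pfun
    rw [abs_of_pos hx0, abs_of_nonneg (by linarith : (0:ℝ) ≤ 1 + x),
      abs_of_nonneg (by linarith : (0:ℝ) ≤ 1 - x)]
    show ((1 + x) ^ β + (1 - x) ^ β - 2) / x ^ (1 + α)
      = ((1 + x) ^ β - 1) / x ^ (1 + α) - (1 - (1 - x) ^ β) / x ^ (1 + α)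
    rw [div_sub_div_same]
    congr 1
    ring
  rw [hcongr, integral_sub (psip_ii hβ0 hb0 one_pos) (pfun_ii hβ0 hb0 one_pos)]
  ring

/-- The small correction term is `O(b^{2-α})`. -/
lemma E_bound {α β : ℝ} (hα1 : 1 < α) (hα2 : α < 2) (hβ : β = α - 1)
    {b : ℝ} (hb0 : 0 < b) (hb2 : b ≤ 1/2) :
    (∫ z in (b / (1 + b))..b, pfun α β z) ≤ 4 * b ^ (2 - α) := by
  have hβ0 : 0 ≤ β := by rw [hβ]; linarith
  have hβ1 : β ≤ 1 := by rw [hβ]; linarith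
  have hα0 : (0:ℝ) ≤ α := by linarith
  have h1b : (0:ℝ) < 1 + b := by linarith
  have hη0 : 0 < b / (1 + b) := div_pos hb0 h1b
  have hηb : b / (1 + b) ≤ b := div_le_self hb0.le (by linarith)
  have hηpow : (0:ℝ) < (b / (1 + b)) ^ α := Real.rpow_pos_of_pos hη0 _
  have hbpow : (0:ℝ) < b ^ α := Real.rpow_pos_of_pos hb0 _
  have hpt : ∀ z ∈ Icc (b / (1 + b)) b, pfun α β z ≤ 1 / (b / (1 + b)) ^ α := by
    intro z hz
    have hz0 : 0 < z := lt_of_lt_of_le hη0 hz.1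
    have hz12 : z ≤ 1/2 := le_trans hz.2 hb2
    have h1z : (0:ℝ) < 1 - z := by linarith
    have step1 : 1 - (1 - z) ^ β ≤ z := by
      have h := Real.rpow_le_rpow_of_exponent_ge h1z (by linarith) hβ1
      rw [Real.rpow_one] at h
      linarith
    have hzpow : (0:ℝ) < z ^ (1 + α) := Real.rpow_pos_of_pos hz0 _
    have step2 : pfun α β z ≤ z / z ^ (1 + α) := by
      unfold pfun
      exact div_le_div_of_nonneg_right step1 hzpow.le
    have step3 : z / z ^ (1 + α) = 1 / z ^ α := by
      rw [Real.rpow_add hz0, Real.rpow_one]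
      have : z ^ α ≠ 0 := ne_of_gt (Real.rpow_pos_of_pos hz0 _)
      field_simp
    have step4 : 1 / z ^ α ≤ 1 / (b / (1 + b)) ^ α := by
      apply one_div_le_one_div_of_le hηpow
      exact Real.rpow_le_rpow hη0.le hz.1 hα0
    calc pfun α β z ≤ z / z ^ (1 + α) := step2
      _ = 1 / z ^ α := step3
      _ ≤ 1 / (b / (1 + b)) ^ α := step4
  have hint : (∫ z in (b / (1 + b))..b, pfun α β z)
      ≤ (b - b / (1 + b)) * (1 / (b / (1 + b)) ^ α) := by
    have h := integral_mono_on hηb (pfun_ii hβ0 hη0 hb0) intervalIntegrable_const hpt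
    rwa [intervalIntegral.integral_const, smul_eq_mul] at h
  have hwidth : b - b / (1 + b) ≤ b ^ 2 := by
    have e : b - b / (1 + b) = b ^ 2 / (1 + b) := by field_simp; ring
    rw [e]
    calc b ^ 2 / (1 + b) ≤ b ^ 2 / 1 :=
          div_le_div_of_nonneg_left (by positivity) one_pos (by linarith)
      _ = b ^ 2 := by ring
  have hCbound : 1 / (b / (1 + b)) ^ α ≤ 4 / b ^ α := by
    have h2b : b / 2 ≤ b / (1 + b) := div_le_div_of_nonneg_left hb0.le h1b (by linarith)
    have h2pow : (b / 2) ^ α ≤ (b / (1 + b)) ^ α :=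
      Real.rpow_le_rpow (by positivity) h2b hα0
    have h2e : (b / 2) ^ α = b ^ α / 2 ^ α := Real.div_rpow hb0.le (by norm_num) _
    have h24 : (2:ℝ) ^ α ≤ 4 := by
      have h := Real.rpow_le_rpow_of_exponent_le one_le_two hα2.le
      rwa [Real.rpow_two, show ((2:ℝ) ^ 2) = 4 by norm_num] at h
    have h2αpos : (0:ℝ) < 2 ^ α := Real.rpow_pos_of_pos two_pos _
    have hq : b ^ α / 4 ≤ (b / (1 + b)) ^ α := by
      calc b ^ α / 4 ≤ b ^ α / 2 ^ α :=
            div_le_div_of_nonneg_left hbpow.le h2αpos h24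
        _ = (b / 2) ^ α := h2e.symm
        _ ≤ (b / (1 + b)) ^ α := h2pow
    calc 1 / (b / (1 + b)) ^ α ≤ 1 / (b ^ α / 4) :=
          one_div_le_one_div_of_le (by positivity) hq
      _ = 4 / b ^ α := by rw [one_div_div]
  have hfinal : (b - b / (1 + b)) * (1 / (b / (1 + b)) ^ α) ≤ b ^ 2 * (4 / b ^ α) :=
    mul_le_mul hwidth hCbound (by positivity) (by positivity)
  have heq : b ^ 2 * (4 / b ^ α) = 4 * b ^ (2 - α) := by
    rw [Real.rpow_sub hb0, Real.rpow_two]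
    ring
  linarith

end Aux

/-- Let `α ∈ (1,2)`, `β = α-1`, `B(a) = ∫_{-a-1}^{-a} (|1+z|^β - 1)/|z|^{1+α} dz` for
`a > 1`, and `G = P.V. ∫_{-1}^{1} (|1+z|^β + |1-z|^β - 2)/|z|^{1+α} dz`. Then there is
`κ > 0` such that `B(a) + G ≤ -κ < 0` for every `a > 1`. -/
theorem B_add_G_neg_uniform (α β G : ℝ) (hα1 : 1 < α) (hα2 : α < 2) (hβ : β = α - 1)
    (hG : Tendsto (fun b : ℝ =>
        ∫ z in {z : ℝ | b < |z| ∧ |z| < 1},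
          (|1 + z| ^ β + |1 - z| ^ β - 2) / |z| ^ (1 + α))
      (𝓝[>] (0 : ℝ)) (𝓝 G)) :
    ∃ κ : ℝ, 0 < κ ∧ ∀ a : ℝ, 1 < a →
      (∫ z in (-a - 1)..(-a), (|1 + z| ^ β - 1) / |z| ^ (1 + α)) + G ≤ -κ := by
  have hβ0 : 0 ≤ β := by rw [hβ]; linarith
  have hβpos : 0 < β := by rw [hβ]; linarith
  have hβ1 : β ≤ 1 := by rw [hβ]; linarith
  set I1 : ℝ := ∫ z in (1/2 : ℝ)..(3/4), pfun α β z with hI1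
  set I2 : ℝ := ∫ z in (5/6 : ℝ)..1, pfun α β z with hI2
  set IH : ℝ := ∫ z in (1/2 : ℝ)..1, pfun α β z with hIH
  have hI1pos : 0 < I1 := by
    apply intervalIntegral.intervalIntegral_pos_of_pos_on
      (pfun_ii hβ0 (by norm_num) (by norm_num))
    · intro x hx
      exact pfun_pos hβpos (by linarith [hx.1]) (by linarith [hx.2])
    · norm_num
  have hI2pos : 0 < I2 := by
    apply intervalIntegral.intervalIntegral_pos_of_pos_on
      (pfun_ii hβ0 (by norm_num) one_pos)
    · intro x hx
      exact pfun_pos hβpos (by linarith [hx.1]) (by linarith [hx.2])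
    · norm_num
  set κ₀ : ℝ := 2 * min I1 I2 with hκ₀def
  have hκ₀pos : 0 < κ₀ := by
    have := lt_min hI1pos hI2pos
    positivity
  -- choice of the truncation parameter b
  set δ : ℝ := 2 - α with hδdef
  have hδpos : 0 < δ := by rw [hδdef]; linarith
  set b : ℝ := min (1/2) ((κ₀/16) ^ (1/δ)) with hbdef
  have hb0 : 0 < b := lt_min (by norm_num) (Real.rpow_pos_of_pos (by positivity) _)
  have hb2 : b ≤ 1/2 := min_le_left _ _
  have hb1 : b < 1 := lt_of_le_of_lt hb2 (by norm_num)
  have hbδ : b ^ δ ≤ κ₀/16 := by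
    have h1 : b ≤ (κ₀/16) ^ (1/δ) := min_le_right _ _
    calc b ^ δ ≤ ((κ₀/16) ^ (1/δ)) ^ δ := Real.rpow_le_rpow hb0.le h1 hδpos.le
      _ = (κ₀/16) ^ ((1/δ) * δ) := by rw [← Real.rpow_mul (by positivity)]
      _ = κ₀/16 := by rw [one_div_mul_cancel (ne_of_gt hδpos), Real.rpow_one]
  -- G is bounded by the truncated integral at level b
  have hGT : G ≤ ∫ z in {z : ℝ | b < |z| ∧ |z| < 1}, phiG α β z := by
    apply le_of_tendsto hG
    filter_upwards [Ioc_mem_nhdsGT_of_mem (⟨le_refl 0, hb0⟩ : (0:ℝ) ∈ Set.Ico 0 b)]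
      with b' hb'
    exact T_mono hβpos hβ1 hb'.1 hb'.2
  -- evaluate the truncated integral
  have hTval : (∫ z in {z : ℝ | b < |z| ∧ |z| < 1}, phiG α β z)
      = 2 * ((∫ z in (b / (1 + b))..b, pfun α β z) - IH) := by
    rw [T_decomp hβ0 hb0 hb1, cov_eta hα1 hβ hb0 hb1.le]
    have hη0 : 0 < b / (1 + b) := div_pos hb0 (by linarith)
    have hs1 : (∫ z in (b / (1 + b))..b, pfun α β z) + (∫ z in b..(1/2 : ℝ), pfun α β z)
        = ∫ z in (b / (1 + b))..(1/2 : ℝ), pfun α β z :=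
      intervalIntegral.integral_add_adjacent_intervals (pfun_ii hβ0 hη0 hb0)
        (pfun_ii hβ0 hb0 (by norm_num))
    have hs2 : (∫ z in b..(1/2 : ℝ), pfun α β z) + IH = ∫ z in b..(1 : ℝ), pfun α β z :=
      intervalIntegral.integral_add_adjacent_intervals (pfun_ii hβ0 hb0 (by norm_num))
        (pfun_ii hβ0 (by norm_num) one_pos)
    linarith [hs1, hs2]
  have hEb : (∫ z in (b / (1 + b))..b, pfun α β z) ≤ κ₀/4 := by
    calc (∫ z in (b / (1 + b))..b, pfun α β z) ≤ 4 * b ^ (2 - α) :=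
          E_bound hα1 hα2 hβ hb0 hb2
      _ = 4 * b ^ δ := by rw [hδdef]
      _ ≤ 4 * (κ₀/16) := by linarith
      _ = κ₀/4 := by ring
  have hGbound : G ≤ κ₀/2 - 2 * IH := by
    rw [hTval] at hGT
    linarith
  refine ⟨κ₀/2, by positivity, fun a ha => ?_⟩
  have hB := B_bound hα1 hα2 hβ ha
  rw [← hI1, ← hI2, ← hIH, ← hκ₀def] at hB
  -- combine
  have : (∫ z in (-a - 1)..(-a), (|1 + z| ^ β - 1) / |z| ^ (1 + α)) + G
      ≤ (2 * IH - κ₀) + (κ₀/2 - 2 * IH) := by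
    apply add_le_add _ hGbound
    calc (∫ z in (-a - 1)..(-a), (|1 + z| ^ β - 1) / |z| ^ (1 + α))
        ≤ 2 * IH - 2 * min I1 I2 := hB
      _ = 2 * IH - κ₀ := by rw [hκ₀def]
  linarith
end

section
/- Let α ∈ (1,2) and β = α - 1. Then G = P.V. ∫_{-1}^{1} (|1+z|^β + |1-z|^β - 2)/|z|^{1+α} dz equals -2 ∫_{ln 2}^{∞} 2 sinh(βx/2)/|2 sinh(x/2)|^{1+α} dx, and in particular G < 0. -/
open MeasureTheory Filter Topology Set Real

noncomputable def gg (α β x : ℝ) : ℝ := 2 * Real.sinh (β * x / 2) / |2 * Real.sinh (x / 2)| ^ (1 + α)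
noncomputable def hp (α β z : ℝ) : ℝ := (|1 + z| ^ β - 1) / |z| ^ (1 + α)
noncomputable def hm (α β z : ℝ) : ℝ := (|1 - z| ^ β - 1) / |z| ^ (1 + α)
noncomputable def ff (α β z : ℝ) : ℝ := (|1 + z| ^ β + |1 - z| ^ β - 2) / |z| ^ (1 + α)



lemma ff_eq (α β z : ℝ) : ff α β z = hp α β z + hm α β z := by
  unfold ff hp hm
  rw [← add_div]
  ring_nf

lemma ff_even (α β z : ℝ) : ff α β (-z) = ff α β z := by
  unfold ff
  rw [show (1 : ℝ) + -z = 1 - z by ring, show (1 : ℝ) - -z = 1 + z by ring, abs_neg]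
  ring_nf

lemma gg_odd (α β x : ℝ) : gg α β (-x) = - gg α β x := by
  unfold gg
  rw [show β * -x / 2 = -(β * x / 2) by ring, show -x / 2 = -(x / 2) by ring,
    Real.sinh_neg, Real.sinh_neg, mul_neg, mul_neg, abs_neg, neg_div]

lemma hm_eq_hp (α β x : ℝ) : hm α β (1 - Real.exp x) = hp α β (Real.exp x - 1) := by
  unfold hm hp
  rw [show (1 : ℝ) - (1 - Real.exp x) = 1 + (Real.exp x - 1) by ring, abs_sub_comm]

lemma key_pointwise (α β : ℝ) (hβ : β = α - 1) (x : ℝ) :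
    Real.exp x * hp α β (Real.exp x - 1) = gg α β x := by
  unfold hp gg
  have h1 : |1 + (Real.exp x - 1)| = Real.exp x := by
    rw [show (1 : ℝ) + (Real.exp x - 1) = Real.exp x by ring]
    exact abs_of_pos (Real.exp_pos x)
  have h2 : |Real.exp x - 1| = Real.exp (x / 2) * |2 * Real.sinh (x / 2)| := by
    have : Real.exp x - 1 = Real.exp (x / 2) * (2 * Real.sinh (x / 2)) := by
      rw [Real.sinh_eq]
      have e1 : Real.exp (x / 2) * Real.exp (x / 2) = Real.exp x := by
        rw [← Real.exp_add]; congr 1; ring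
      have e2 : Real.exp (x / 2) * Real.exp (-(x / 2)) = 1 := by
        rw [← Real.exp_add]; simp
      linear_combination e2 - e1
    rw [this, abs_mul, abs_of_pos (Real.exp_pos _)]
  rw [h1, h2]
  have hD : (0 : ℝ) ≤ |2 * Real.sinh (x / 2)| := abs_nonneg _
  rw [Real.mul_rpow (Real.exp_pos _).le hD]
  set D := |2 * Real.sinh (x / 2)| ^ (1 + α) with hDdef
  have hexp : ∀ a b : ℝ, Real.exp a ^ b = Real.exp (a * b) := by
    intro a b
    rw [Real.rpow_def_of_pos (Real.exp_pos a), Real.log_exp]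
  rw [hexp, hexp]
  rcases eq_or_ne D 0 with hD0 | hD0
  · simp [hD0]
  · have hkey : Real.exp x * (Real.exp (x * β) - 1) =
        2 * Real.sinh (β * x / 2) * Real.exp (x / 2 * (1 + α)) := by
      rw [Real.sinh_eq]
      have e3 : Real.exp (x / 2 * (1 + α)) * Real.exp (β * x / 2) = Real.exp (x + x * β) := by
        rw [← Real.exp_add]; congr 1; rw [hβ]; ring
      have e4 : Real.exp (x / 2 * (1 + α)) * Real.exp (-(β * x / 2)) = Real.exp x := by
        rw [← Real.exp_add]; congr 1; rw [hβ]; ring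
      have e5 : Real.exp x * Real.exp (x * β) = Real.exp (x + x * β) := by
        rw [← Real.exp_add]
      linear_combination e5 - e3 + e4
    have hE : Real.exp (x / 2 * (1 + α)) ≠ 0 := (Real.exp_pos _).ne'
    rw [div_mul_eq_div_div, mul_div_assoc']
    congr 1
    rw [mul_div_assoc', div_eq_iff hE]
    exact hkey




-- substitution lemma 1
lemma sub1 (α β : ℝ) (hβ : β = α - 1) {s : Set ℝ} (hs : MeasurableSet s) :
    ∫ z in (fun x => Real.exp x - 1) '' s, hp α β z = ∫ x in s, gg α β x := by
  rw [integral_image_eq_integral_abs_deriv_smul (f' := fun x => Real.exp x) hs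
      (fun x _ => ((Real.hasDerivAt_exp x).sub_const 1).hasDerivWithinAt)
      (fun a _ b _ h => Real.exp_injective (by simpa using h) :
        InjOn (fun x => Real.exp x - 1) s)]
  refine setIntegral_congr_fun hs fun x _ => ?_
  rw [abs_of_pos (Real.exp_pos x), smul_eq_mul]
  exact key_pointwise α β hβ x

lemma sub2 (α β : ℝ) (hβ : β = α - 1) {s : Set ℝ} (hs : MeasurableSet s) :
    ∫ z in (fun x => 1 - Real.exp x) '' s, hm α β z = ∫ x in s, gg α β x := by
  rw [integral_image_eq_integral_abs_deriv_smul (f' := fun x => -Real.exp x) hs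
      (fun x _ => (((Real.hasDerivAt_exp x).const_sub 1)).hasDerivWithinAt)
      (fun a _ b _ h => Real.exp_injective (by simpa using h) :
        InjOn (fun x => 1 - Real.exp x) s)]
  refine setIntegral_congr_fun hs fun x _ => ?_
  rw [abs_neg, abs_of_pos (Real.exp_pos x), smul_eq_mul, hm_eq_hp]
  exact key_pointwise α β hβ x

lemma img1 (a b : ℝ) :
    (fun x => Real.exp x - 1) '' Ioo a b = Ioo (Real.exp a - 1) (Real.exp b - 1) := by
  ext z
  constructor
  · rintro ⟨x, ⟨hx1, hx2⟩, rfl⟩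
    exact ⟨by simpa using Real.exp_lt_exp.2 hx1, by simpa using Real.exp_lt_exp.2 hx2⟩
  · rintro ⟨h1, h2⟩
    have hz : 0 < 1 + z := by nlinarith [Real.exp_pos a]
    refine ⟨Real.log (1 + z), ⟨?_, ?_⟩, by show Real.exp (Real.log (1 + z)) - 1 = z; rw [Real.exp_log hz]; ring⟩
    · rw [← Real.log_exp a]; exact Real.log_lt_log (Real.exp_pos a) (by linarith)
    · rw [← Real.log_exp b]; exact Real.log_lt_log hz (by linarith)

lemma img2 (c : ℝ) :
    (fun x => 1 - Real.exp x) '' Iio c = Ioo (1 - Real.exp c) 1 := by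
  ext z
  constructor
  · rintro ⟨x, hx, rfl⟩
    exact ⟨by simpa using Real.exp_lt_exp.2 hx, by simpa using Real.exp_pos x⟩
  · rintro ⟨h1, h2⟩
    have hz : 0 < 1 - z := by linarith
    refine ⟨Real.log (1 - z), ?_, by show 1 - Real.exp (Real.log (1 - z)) = z; rw [Real.exp_log hz]; ring⟩
    rw [← Real.log_exp c]
    exact Real.log_lt_log hz (by linarith)



lemma cont1 (γ : ℝ) (hγ : 0 ≤ γ) : Continuous fun z : ℝ => |z| ^ γ := by
  rw [continuous_iff_continuousAt]
  intro z
  exact (Real.continuousAt_rpow_const |z| γ (Or.inr hγ)).comp continuous_abs.continuousAt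

lemma denom_pos {z : ℝ} (hz : z ≠ 0) (γ : ℝ) : 0 < |z| ^ γ :=
  Real.rpow_pos_of_pos (abs_pos.2 hz) γ

section conts
variable {α β : ℝ} (hα1 : 1 < α) (hα2 : α < 2) (hβ : β = α - 1)
include hα1 hβ

lemma hβ0 : 0 ≤ β := by rw [hβ]; linarith
omit hβ in lemma hα0 : (0:ℝ) ≤ 1 + α := by linarith

lemma cont_hp : ContinuousOn (hp α β) {z | z ≠ 0} := by
  intro z hz
  refine ContinuousAt.continuousWithinAt ?_
  refine ContinuousAt.div ?_ ?_ (denom_pos hz (1 + α)).ne'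
  · exact (((cont1 β (hβ0 hα1 hβ)).comp (continuous_const.add continuous_id)).continuousAt).sub
      continuousAt_const
  · exact ((cont1 (1 + α) (hα0 hα1)).continuousAt)

lemma cont_hm : ContinuousOn (hm α β) {z | z ≠ 0} := by
  intro z hz
  refine ContinuousAt.continuousWithinAt ?_
  refine ContinuousAt.div ?_ ?_ (denom_pos hz (1 + α)).ne'
  · exact (((cont1 β (hβ0 hα1 hβ)).comp (continuous_const.sub continuous_id)).continuousAt).sub
      continuousAt_const
  · exact ((cont1 (1 + α) (hα0 hα1)).continuousAt)

lemma cont_ff : ContinuousOn (ff α β) {z | z ≠ 0} := by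
  intro z hz
  refine ContinuousAt.continuousWithinAt ?_
  refine ContinuousAt.div ?_ ?_ (denom_pos hz (1 + α)).ne'
  · exact ((((cont1 β (hβ0 hα1 hβ)).comp (continuous_const.add continuous_id)).continuousAt).add
      (((cont1 β (hβ0 hα1 hβ)).comp (continuous_const.sub continuous_id)).continuousAt)).sub
      continuousAt_const
  · exact ((cont1 (1 + α) (hα0 hα1)).continuousAt)

omit hβ in lemma cont_gg : ContinuousOn (gg α β) {x | x ≠ 0} := by
  intro x hx
  refine ContinuousAt.continuousWithinAt ?_
  have hd : Continuous fun x : ℝ => |2 * Real.sinh (x / 2)| ^ (1 + α) :=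
    (cont1 (1 + α) (hα0 hα1)).comp (continuous_const.mul (Real.continuous_sinh.comp
      (continuous_id.div_const 2)))
  refine ContinuousAt.div ?_ hd.continuousAt ?_
  · exact (continuous_const.mul (Real.continuous_sinh.comp
      ((continuous_const.mul continuous_id).div_const 2))).continuousAt
  · have : Real.sinh (x / 2) ≠ 0 := by
      rw [ne_eq, Real.sinh_eq_zero]
      exact fun h => hx (by simpa using h)
    exact (denom_pos (by simpa using this) (1 + α)).ne'

lemma intOn_hp {a b : ℝ} (ha : 0 < a) : IntegrableOn (hp α β) (Ioo a b) := by
  refine IntegrableOn.mono_set ?_ Ioo_subset_Icc_self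
  exact (((cont_hp hα1 hβ).mono fun z hz => (by intro h; simp at hz; nlinarith [hz.1] :
    z ≠ 0)).integrableOn_Icc)

lemma intOn_hm_Icc {a b : ℝ} (ha : 0 < a) : IntegrableOn (hm α β) (Icc a b) :=
  (((cont_hm hα1 hβ).mono fun z hz => (by intro h; simp at hz; nlinarith [hz.1] :
    z ≠ 0)).integrableOn_Icc)

lemma intOn_ff_pos {a b : ℝ} (ha : 0 < a) : IntegrableOn (ff α β) (Ioo a b) := by
  refine IntegrableOn.mono_set ?_ Ioo_subset_Icc_self
  exact (((cont_ff hα1 hβ).mono fun z hz => (by intro h; simp at hz; nlinarith [hz.1] :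
    z ≠ 0)).integrableOn_Icc)

lemma intOn_ff_neg {a b : ℝ} (hb : b < 0) : IntegrableOn (ff α β) (Ioo a b) := by
  refine IntegrableOn.mono_set ?_ Ioo_subset_Icc_self
  exact (((cont_ff hα1 hβ).mono fun z hz => (by intro h; simp at hz; nlinarith [hz.2] :
    z ≠ 0)).integrableOn_Icc)

omit hα1 hβ in lemma two_sinh_eq (x : ℝ) : 2 * Real.sinh (x / 2) = Real.exp (x / 2) * (1 - Real.exp (-x)) := by
  rw [Real.sinh_eq]
  have e1 : Real.exp (x / 2) * Real.exp (-x) = Real.exp (-(x / 2)) := by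
    rw [← Real.exp_add]; congr 1; ring
  linear_combination e1

include hα2 in
lemma gg_bound {t : ℝ} (ht : 0 < t) {x : ℝ} (hx : x ∈ Ioi t) :
    ‖gg α β x‖ ≤ ((1 - Real.exp (-t)) ^ (1 + α))⁻¹ * Real.exp (-x) := by
  have hxt : t < x := hx
  have hx0 : 0 < x := lt_trans ht hxt
  have hβpos : 0 < β := by rw [hβ]; linarith
  set δ := 1 - Real.exp (-t) with hδ
  have hδ0 : 0 < δ := by
    have := Real.exp_lt_one_iff.2 (neg_lt_zero.2 ht)
    simp [hδ]; linarith
  have hs2 : 2 * Real.sinh (x / 2) = Real.exp (x / 2) * (1 - Real.exp (-x)) := two_sinh_eq x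
  have hsinh_pos : 0 < 2 * Real.sinh (x / 2) := mul_pos two_pos (Real.sinh_pos_iff.2 (by linarith))
  have habs : |2 * Real.sinh (x / 2)| = 2 * Real.sinh (x / 2) := abs_of_pos hsinh_pos
  have hlow : Real.exp (x / 2) * δ ≤ 2 * Real.sinh (x / 2) := by
    rw [hs2]
    have : Real.exp (-x) ≤ Real.exp (-t) := Real.exp_le_exp.2 (by linarith)
    have h2 := (Real.exp_pos (x / 2)).le
    nlinarith
  have hnum : 2 * Real.sinh (β * x / 2) ≤ Real.exp (β * x / 2) := by
    rw [Real.sinh_eq]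
    have := (Real.exp_pos (-(β * x / 2))).le
    linarith
  have hggnn : 0 ≤ gg α β x := by
    unfold gg
    have : 0 ≤ Real.sinh (β * x / 2) := Real.sinh_nonneg_iff.2 (by positivity)
    positivity
  rw [Real.norm_eq_abs, abs_of_nonneg hggnn]
  unfold gg
  rw [habs]
  have hEδ : 0 < (Real.exp (x / 2) * δ) ^ (1 + α) := Real.rpow_pos_of_pos (by positivity) _
  have step1 : 2 * Real.sinh (β * x / 2) / (2 * Real.sinh (x / 2)) ^ (1 + α) ≤
      Real.exp (β * x / 2) / (Real.exp (x / 2) * δ) ^ (1 + α) := by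
    refine div_le_div₀ (Real.exp_pos _).le hnum hEδ ?_
    exact Real.rpow_le_rpow (by positivity) hlow (by linarith)
  refine le_trans step1 (le_of_eq ?_)
  rw [Real.mul_rpow (Real.exp_pos _).le hδ0.le]
  rw [show Real.exp (x / 2) ^ (1 + α) = Real.exp (x / 2 * (1 + α)) by
    rw [Real.rpow_def_of_pos (Real.exp_pos _), Real.log_exp]]
  have hxeq : Real.exp (β * x / 2) = Real.exp (x / 2 * (1 + α)) * Real.exp (-x) := by
    rw [← Real.exp_add]; congr 1; rw [hβ]; ring
  rw [hxeq, mul_div_mul_left _ _ (Real.exp_pos _).ne', div_eq_inv_mul]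

include hα2 in
lemma intOn_gg {t : ℝ} (ht : 0 < t) : IntegrableOn (gg α β) (Ioi t) := by
  have hmeas : AEStronglyMeasurable (gg α β) (volume.restrict (Ioi t)) := by
    refine ContinuousOn.aestronglyMeasurable ((cont_gg hα1).mono ?_) measurableSet_Ioi
    intro x hx
    simp only [mem_setOf_eq]
    have : t < x := hx
    intro h; rw [h] at this; linarith
  have hInt : IntegrableOn (fun x => ((1 - Real.exp (-t)) ^ (1 + α))⁻¹ * Real.exp (-x)) (Ioi t) := by
    have := exp_neg_integrableOn_Ioi t (one_pos)
    simpa [IntegrableOn] using this.const_mul ((1 - Real.exp (-t)) ^ (1 + α))⁻¹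
  refine Integrable.mono' hInt hmeas ?_
  exact (ae_restrict_iff' measurableSet_Ioi).2 (ae_of_all _ fun x hx => gg_bound hα1 hα2 hβ ht hx)



include hα1 hα2 hβ in
lemma core {b : ℝ} (hb0 : 0 < b) (hb : b < 1/2) :
    ∫ z in Ioo b 1, ff α β z =
      -(∫ x in Ioi (Real.log 2), gg α β x) - ∫ z in Ioo (b/(1+b)) b, hm α β z := by
  set t := Real.log (1 + b) with htdef
  have h1b : (0:ℝ) < 1 + b := by linarith
  have ht0 : 0 < t := Real.log_pos (by linarith)
  have htlog2 : t < Real.log 2 := Real.log_lt_log h1b (by linarith)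
  set a' := b / (1 + b) with ha'def
  have ha'0 : 0 < a' := by positivity
  have ha'b : a' < b := div_lt_self hb0 (by linarith)
  -- Step A
  have stepA : ∫ z in Ioo b 1, ff α β z =
      (∫ z in Ioo b 1, hp α β z) + ∫ z in Ioo b 1, hm α β z := by
    rw [← integral_add (intOn_hp hα1 hβ hb0) ((intOn_hm_Icc hα1 hβ hb0).mono_set Ioo_subset_Icc_self)]
    exact setIntegral_congr_fun measurableSet_Ioo fun z _ => ff_eq α β z
  -- Step B
  have stepB : ∫ z in Ioo b 1, hp α β z = ∫ x in Ioo t (Real.log 2), gg α β x := by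
    have himg : (fun x => Real.exp x - 1) '' Ioo t (Real.log 2) = Ioo b 1 := by
      rw [img1, Real.exp_log h1b, Real.exp_log two_pos]
      norm_num
    rw [← himg, sub1 α β hβ measurableSet_Ioo]
  -- Step C
  have stepC : ∫ z in Ioo a' 1, hm α β z = ∫ x in Iio (-t), gg α β x := by
    have himg2 : (fun x => 1 - Real.exp x) '' Iio (-t) = Ioo a' 1 := by
      rw [img2, Real.exp_neg, Real.exp_log h1b]
      congr 1
      rw [ha'def]
      field_simp
      ring
    rw [← himg2, sub2 α β hβ measurableSet_Iio]
  -- Step D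
  have stepD : ∫ z in Ioo a' 1, hm α β z =
      (∫ z in Ioo a' b, hm α β z) + ∫ z in Ioo b 1, hm α β z := by
    rw [← integral_Ioc_eq_integral_Ioo, ← integral_Ioc_eq_integral_Ioo,
      ← integral_Ioc_eq_integral_Ioo, ← Set.Ioc_union_Ioc_eq_Ioc ha'b.le (by linarith : b ≤ 1),
      setIntegral_union (Set.Ioc_disjoint_Ioc_of_le le_rfl) measurableSet_Ioc
        ((intOn_hm_Icc hα1 hβ ha'0).mono_set Ioc_subset_Icc_self)
        ((intOn_hm_Icc hα1 hβ hb0).mono_set Ioc_subset_Icc_self)]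
  -- Step E
  have stepE : ∫ x in Iio (-t), gg α β x = -∫ x in Ioi t, gg α β x := by
    rw [← integral_Iic_eq_integral_Iio, ← integral_comp_neg_Ioi]
    simp_rw [gg_odd]
    exact integral_neg _
  -- Step F
  have stepF : ∫ x in Ioi t, gg α β x =
      (∫ x in Ioo t (Real.log 2), gg α β x) + ∫ x in Ioi (Real.log 2), gg α β x := by
    rw [← integral_Ioc_eq_integral_Ioo, ← Set.Ioc_union_Ioi_eq_Ioi htlog2.le,
      setIntegral_union Set.Ioc_disjoint_Ioi_same measurableSet_Ioi
        ((intOn_gg hα1 hα2 hβ ht0).mono_set Ioc_subset_Ioi_self)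
        ((intOn_gg hα1 hα2 hβ ht0).mono_set (Ioi_subset_Ioi htlog2.le))]
  linarith [stepA, stepB, stepC, stepD, stepE, stepF]

include hα1 hα2 hβ in
lemma symm_split {b : ℝ} (hb0 : 0 < b) (hb : b < 1) :
    ∫ z in {z : ℝ | b < |z| ∧ |z| < 1}, ff α β z = 2 * ∫ z in Ioo b 1, ff α β z := by
  have hset : {z : ℝ | b < |z| ∧ |z| < 1} = Ioo (-1) (-b) ∪ Ioo b 1 := by
    ext z
    simp only [mem_setOf_eq, mem_union, mem_Ioo]
    rcases abs_cases z with ⟨h, h0⟩ | ⟨h, h0⟩ <;> rw [h] <;>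
      constructor <;> intro hh
    · right; exact hh
    · rcases hh with ⟨h1, h2⟩ | hh
      · constructor <;> linarith
      · exact hh
    · left; constructor <;> linarith
    · rcases hh with ⟨h1, h2⟩ | ⟨h1, h2⟩
      · constructor <;> linarith
      · constructor <;> linarith
  have hneg : ∫ z in Ioo (-1 : ℝ) (-b), ff α β z = ∫ z in Ioo b 1, ff α β z := by
    have himg : (fun x : ℝ => -x) '' Ioo b 1 = Ioo (-1 : ℝ) (-b) := by
      ext z
      constructor
      · rintro ⟨x, ⟨hx1, hx2⟩, rfl⟩
        constructor <;> simp <;> linarith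
      · rintro ⟨h1, h2⟩
        exact ⟨-z, ⟨by linarith, by linarith⟩, by ring⟩
    rw [← himg, integral_image_eq_integral_abs_deriv_smul (f' := fun _ => (-1 : ℝ))
      measurableSet_Ioo (fun x _ => (hasDerivAt_neg x).hasDerivWithinAt) neg_injective.injOn]
    simp only [abs_neg, abs_one, one_smul, ff_even]
  rw [hset, setIntegral_union (by
      rw [Set.disjoint_left]
      rintro z ⟨h1, h2⟩ ⟨h3, h4⟩
      linarith) measurableSet_Ioo (intOn_ff_neg hα1 hβ (by linarith))
      (intOn_ff_pos hα1 hβ hb0), hneg]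
  ring

include hα1 hα2 hβ in
lemma Ebound {b : ℝ} (hb0 : 0 < b) (hb : b ≤ 1/2) :
    ‖∫ z in Ioo (b/(1+b)) b, hm α β z‖ ≤ 2^(1+α) * b^(2-α) := by
  set a' := b / (1 + b) with ha'def
  have h1b : (0:ℝ) < 1 + b := by linarith
  have ha'0 : 0 < a' := by positivity
  have ha'half : b / 2 ≤ a' := by
    rw [ha'def, div_le_div_iff₀ two_pos h1b]
    nlinarith
  have hβ0 : (0:ℝ) ≤ β := by rw [hβ]; linarith
  have hβ1 : β ≤ 1 := by rw [hβ]; linarith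
  have hbound : ∀ z ∈ Ioo a' b, ‖hm α β z‖ ≤ b / (b/2)^(1+α) := by
    rintro z ⟨hz1, hz2⟩
    have hz0 : 0 < z := lt_trans ha'0 hz1
    have hzb : z < b := hz2
    have hz1' : z < 1 := by linarith
    unfold hm
    rw [abs_of_pos (by linarith : (0:ℝ) < 1 - z), abs_of_pos hz0]
    have hup : (1 - z)^β ≤ 1 := Real.rpow_le_one (by linarith) (by linarith) hβ0
    have hlo : 1 - z ≤ (1 - z)^β := by
      nth_rewrite 1 [show (1:ℝ) - z = (1 - z)^(1:ℝ) by rw [Real.rpow_one]]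
      exact Real.rpow_le_rpow_of_exponent_ge (by linarith) (by linarith) hβ1
    have hnum : |(1 - z)^β - 1| ≤ b := by
      rw [abs_le]
      constructor <;> linarith
    have hden : (b/2)^(1+α) ≤ z^(1+α) :=
      Real.rpow_le_rpow (by positivity) (by linarith) (by linarith)
    rw [Real.norm_eq_abs, abs_div, abs_of_pos (Real.rpow_pos_of_pos hz0 _)]
    exact div_le_div₀ hb0.le hnum (Real.rpow_pos_of_pos (by positivity) _) hden
  have hmeas : volume (Ioo a' b) < ⊤ := by
    rw [Real.volume_Ioo]
    exact ENNReal.ofReal_lt_top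
  have := norm_setIntegral_le_of_norm_le_const (μ := volume) hmeas hbound
  rw [measureReal_def] at this
  refine le_trans this ?_
  have ha'b : a' < b := div_lt_self hb0 (by linarith)
  rw [Real.volume_Ioo, ENNReal.toReal_ofReal (by linarith)]
  have hba' : b - a' ≤ b * b := by
    have heq : b - a' = b * b / (1 + b) := by
      rw [ha'def]; field_simp; ring
    rw [heq, div_le_iff₀ h1b]
    nlinarith
  have hC0 : 0 ≤ b / (b/2)^(1+α) := by positivity
  refine le_trans (mul_le_mul_of_nonneg_left hba' hC0) (le_of_eq ?_)
  rw [Real.div_rpow (by linarith) (by norm_num : (0:ℝ) ≤ 2)]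
  have hbne : b^(1+α) ≠ 0 := (Real.rpow_pos_of_pos hb0 _).ne'
  have h2ne : (2:ℝ)^(1+α) ≠ 0 := (Real.rpow_pos_of_pos two_pos _).ne'
  have hb3 : b * b * b = b^((3:ℝ)) := by
    rw [show ((3:ℝ)) = ((3:ℕ):ℝ) by norm_num, Real.rpow_natCast]
    ring
  have hsub : b^((3:ℝ)) / b^(1+α) = b^(2-α) := by
    rw [← Real.rpow_sub hb0]
    congr 1
    ring
  have key : b * b * b = b^(2-α) * b^(1+α) := by
    rw [hb3, ← Real.rpow_add hb0]
    congr 1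
    ring
  field_simp
  linear_combination key

end conts


/-- For `α ∈ (1,2)` and `β = α-1`, the principal value
`G = P.V. ∫_{-1}^{1} (|1+z|^β + |1-z|^β - 2)/|z|^{1+α} dz` equals
`-2 ∫_{ln 2}^{∞} 2 sinh(βx/2)/|2 sinh(x/2)|^{1+α} dx`, and in particular `G < 0`. -/
theorem G_eq_and_neg (α β : ℝ) (hα1 : 1 < α) (hα2 : α < 2) (hβ : β = α - 1) :
    Tendsto (fun b : ℝ =>
        ∫ z in {z : ℝ | b < |z| ∧ |z| < 1},
          (|1 + z| ^ β + |1 - z| ^ β - 2) / |z| ^ (1 + α))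
      (𝓝[>] (0 : ℝ))
      (𝓝 (-2 * ∫ x in Set.Ioi (Real.log 2),
            2 * Real.sinh (β * x / 2) / |2 * Real.sinh (x / 2)| ^ (1 + α))) ∧
    -2 * (∫ x in Set.Ioi (Real.log 2),
        2 * Real.sinh (β * x / 2) / |2 * Real.sinh (x / 2)| ^ (1 + α)) < 0 := by
  have hJint : IntegrableOn (gg α β) (Ioi (Real.log 2)) :=
    intOn_gg hα1 hα2 hβ (Real.log_pos one_lt_two)
  have hJpos : 0 < ∫ x in Ioi (Real.log 2), gg α β x := by
    rw [setIntegral_pos_iff_support_of_nonneg_ae ?_ hJint]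
    · have hsub : Ioi (Real.log 2) ⊆ Function.support (gg α β) := by
        intro x hx
        have hx0 : 0 < x := lt_trans (Real.log_pos one_lt_two) hx
        have hβ0 : 0 < β := by rw [hβ]; linarith
        have hnum : 0 < 2 * Real.sinh (β * x / 2) :=
          mul_pos two_pos (Real.sinh_pos_iff.2 (by positivity))
        have hden : 0 < |2 * Real.sinh (x / 2)| ^ (1 + α) := by
          refine Real.rpow_pos_of_pos (abs_pos.2 ?_) _
          exact (mul_pos two_pos (Real.sinh_pos_iff.2 (by positivity))).ne'
        exact (div_pos hnum hden).ne'
      rw [Set.inter_eq_self_of_subset_right hsub, Real.volume_Ioi]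
      simp
    · refine (ae_restrict_iff' measurableSet_Ioi).2 (ae_of_all _ fun x hx => ?_)
      have hx0 : 0 < x := lt_trans (Real.log_pos one_lt_two) hx
      have hβ0 : 0 < β := by rw [hβ]; linarith
      exact div_nonneg (mul_nonneg two_pos.le (Real.sinh_nonneg_iff.2 (by positivity)))
        (Real.rpow_nonneg (abs_nonneg _) _)
  constructor
  · show Tendsto (fun b : ℝ => ∫ z in {z : ℝ | b < |z| ∧ |z| < 1}, ff α β z)
      (𝓝[>] (0 : ℝ)) (𝓝 (-2 * ∫ x in Ioi (Real.log 2), gg α β x))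
    set J := ∫ x in Ioi (Real.log 2), gg α β x with hJ
    have hmem : Ioo (0:ℝ) (1/2) ∈ 𝓝[>] (0:ℝ) :=
      Ioo_mem_nhdsGT_of_mem ⟨le_refl 0, by norm_num⟩
    have hEq : ∀ᶠ b in 𝓝[>] (0:ℝ),
        -2 * J - 2 * (∫ z in Ioo (b/(1+b)) b, hm α β z) =
          ∫ z in {z : ℝ | b < |z| ∧ |z| < 1}, ff α β z := by
      filter_upwards [hmem] with b hb
      rw [symm_split hα1 hα2 hβ hb.1 (by linarith [hb.2]), core hα1 hα2 hβ hb.1 hb.2]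
      ring
    have hE0 : Tendsto (fun b : ℝ => ∫ z in Ioo (b/(1+b)) b, hm α β z) (𝓝[>] (0:ℝ)) (𝓝 0) := by
      refine squeeze_zero_norm' (a := fun b : ℝ => (2:ℝ)^(1+α) * b^(2-α)) ?_ ?_
      · exact Eventually.mono hmem fun b hb => Ebound hα1 hα2 hβ hb.1 hb.2.le
      · have hc : Tendsto (fun b : ℝ => b^(2-α)) (𝓝 0) (𝓝 0) := by
          have hc2 := (Real.continuousAt_rpow_const 0 (2-α) (Or.inr (by linarith))).tendsto
          rwa [Real.zero_rpow (by intro h; linarith [h] : (2:ℝ)-α ≠ 0)] at hc2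
        have := (hc.const_mul ((2:ℝ)^(1+α))).mono_left (nhdsWithin_le_nhds (s := Ioi (0:ℝ)))
        simpa using this
    have hlim : Tendsto (fun b : ℝ => -2 * J - 2 * (∫ z in Ioo (b/(1+b)) b, hm α β z))
        (𝓝[>] (0:ℝ)) (𝓝 (-2 * J)) := by
      have := (tendsto_const_nhds (x := -2*J) (f := 𝓝[>] (0:ℝ))).sub (hE0.const_mul 2)
      simpa using this
    exact Tendsto.congr' hEq hlim
  · show -2 * (∫ x in Ioi (Real.log 2), gg α β x) < 0
    linarith
end
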